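/- arXiv:2305.02736 — 14 statements merged into one kernel-verified Lean document; each statement's English description precedes it below -/
import Mathlib

section
/- Let Σ be a finite alphabet and let L₁, L₂ ⊆ Σ* be languages each accepted by some upward-compatible well-structured transition system (WSTS). Then L₁ and L₂ are regularly separable if and only if L₁ ∩ L₂ = ∅. -/
/-- A labeled transition system whose states carry a compatible quasi order
(an upward-compatible LTS, ULTS): the final states are upward closed and the
quasi order is a simulation relation. -/
structure ULTS (A : Type) : Type 1 where
  S : Type
  le : S → S → Prop
  le_refl : ∀ s, le s s
  le_trans : ∀ ⦃s t u⦄, le s t → le t u → le s u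
  init : Set S
  tr : S → A → Set S
  final : Set S
  final_up : ∀ ⦃s t⦄, s ∈ final → le s t → t ∈ final
  sim : ∀ ⦃s t⦄ (a : A) ⦃s'⦄, le s t → s' ∈ tr s a → ∃ t', t' ∈ tr t a ∧ le s' t'

namespace ULTS

variable {A : Type}

/-- One-step successors of a set of states. -/
def stepSet (U : ULTS A) (P : Set U.S) (a : A) : Set U.S := ⋃ s ∈ P, U.tr s a

/-- States reachable from `P` by reading a word. -/
def reachSet (U : ULTS A) (P : Set U.S) : List A → Set U.S
  | [] => P
  | a :: w => U.reachSet (U.stepSet P a) w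

/-- The language of a ULTS: words that can reach a final state from an initial state. -/
def lang (U : ULTS A) : Set (List A) := {w | (U.reachSet U.init w ∩ U.final).Nonempty}

/-- The quasi order of the ULTS is a well quasi order; a ULTS with this property
is a (upward-compatible) WSTS. -/
def IsWQO (U : ULTS A) : Prop := ∀ f : ℕ → U.S, ∃ i j, i < j ∧ U.le (f i) (f j)

/-- A ULTS is deterministic if the set of initial states and every transition image
are singletons. -/
def Deterministic (U : ULTS A) : Prop :=
  (∃ s, U.init = {s}) ∧ ∀ s a, ∃ t, U.tr s a = {t}

end ULTS

/-- A language is regular if it is accepted by a deterministic finite automaton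
with finitely many states. -/
def IsRegularLang {A : Type} (L : Set (List A)) : Prop :=
  ∃ (Q : Type) (_ : Fintype Q) (M : DFA A Q), M.accepts = L

/-- Two languages are regularly separable if some regular language contains the
first and is disjoint from the second. -/
def RegSep {A : Type} (L1 L2 : Set (List A)) : Prop :=
  ∃ R : Set (List A), IsRegularLang R ∧ L1 ⊆ R ∧ R ∩ L2 = ∅


namespace WSTSSep

/-- A quasi order as data. -/
class QO (S : Type) : Type where
  rel : S → S → Prop
  refl : ∀ s, rel s s
  trans : ∀ {a b c}, rel a b → rel b c → rel a c

variable {S : Type} [QO S]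

local infix:50 " ≼ " => QO.rel

/-- The Hoare powerspace of `S`: the powerset with the lower topology. -/
def HQ (S : Type) : Type := Set S

namespace HQ

def mk (T : Set S) : HQ S := T
def toSet (T : HQ S) : Set S := T

/-- Basic open sets: subsets dominating every member of a finite list. -/
def VF (l : List S) : Set (HQ S) := {T | ∀ s ∈ l, ∃ t ∈ toSet T, s ≼ t}

def gens (S : Type) [QO S] : Set (Set (HQ S)) := {O | ∃ l : List S, O = VF l}

instance : TopologicalSpace (HQ S) := .generateFrom (gens S)

lemma isOpen_iff_generate {O : Set (HQ S)} :
    IsOpen O ↔ TopologicalSpace.GenerateOpen (gens S) O := Iff.rfl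

lemma isOpen_VF (l : List S) : IsOpen (VF l) :=
  isOpen_iff_generate.2 (.basic _ ⟨l, rfl⟩)

lemma VF_append (l1 l2 : List S) : VF (l1 ++ l2) = VF l1 ∩ VF l2 := by
  ext T; simp only [VF, Set.mem_setOf_eq, List.mem_append, Set.mem_inter_iff]
  constructor
  · exact fun h => ⟨fun s hs => h s (Or.inl hs), fun s hs => h s (Or.inr hs)⟩
  · rintro ⟨h1, h2⟩ s (hs | hs)
    exacts [h1 s hs, h2 s hs]

lemma exists_VF {O : Set (HQ S)} (hO : IsOpen O) {T : HQ S} (hT : T ∈ O) :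
    ∃ l : List S, T ∈ VF l ∧ VF l ⊆ O := by
  rw [isOpen_iff_generate] at hO
  induction hO with
  | basic O hO => rcases hO with ⟨l, rfl⟩; exact ⟨l, hT, subset_rfl⟩
  | univ => exact ⟨[], by simp [VF], by simp⟩
  | inter O1 O2 h1 h2 ih1 ih2 =>
      obtain ⟨l1, hl1, hs1⟩ := ih1 hT.1
      obtain ⟨l2, hl2, hs2⟩ := ih2 hT.2
      refine ⟨l1 ++ l2, ?_, ?_⟩
      · rw [VF_append]; exact ⟨hl1, hl2⟩
      · rw [VF_append]; exact fun x hx => ⟨hs1 hx.1, hs2 hx.2⟩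
  | sUnion K hK ih =>
      obtain ⟨O, hO, hTO⟩ := hT
      obtain ⟨l, h1, h2⟩ := ih O hO hTO
      exact ⟨l, h1, h2.trans (Set.subset_sUnion_of_mem hO)⟩

lemma forall₂_exists {r : S → S → Prop} : ∀ {l1 l2 : List S}, List.Forall₂ r l1 l2 →
    ∀ x ∈ l1, ∃ y ∈ l2, r x y := by
  intro l1 l2 h
  induction h with
  | nil => intro x hx; cases hx
  | cons h _ ih =>
      intro x hx
      rcases List.mem_cons.1 hx with rfl | hx
      · exact ⟨_, List.mem_cons_self, h⟩
      · obtain ⟨y, hy, hr⟩ := ih x hx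
        exact ⟨y, List.mem_cons_of_mem _ hy, hr⟩

lemma VF_anti {l1 l2 : List S} (h : List.SublistForall₂ QO.rel l1 l2) :
    VF l2 ⊆ VF l1 := by
  rw [List.sublistForall₂_iff] at h
  obtain ⟨l, hf, hsub⟩ := h
  intro T hT s hs
  obtain ⟨y, hy, hr⟩ := forall₂_exists hf s hs
  obtain ⟨t, ht, hr'⟩ := hT y (hsub.subset hy)
  exact ⟨t, ht, QO.trans hr hr'⟩

/-- Upward closed sets of states. -/
def Up (P : Set S) : Prop := ∀ ⦃s t⦄, s ∈ P → s ≼ t → t ∈ P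

/-- The diamond opens. -/
def dia (P : Set S) : Set (HQ S) := {T | ∃ t ∈ toSet T, t ∈ P}

lemma isOpen_dia {P : Set S} (hP : Up P) : IsOpen (dia P) := by
  have : dia P = ⋃ p ∈ P, VF [p] := by
    ext T
    simp only [dia, Set.mem_setOf_eq, Set.mem_iUnion, VF, List.mem_singleton]
    constructor
    · rintro ⟨t, ht, htP⟩
      exact ⟨t, htP, fun s hs => hs ▸ ⟨t, ht, QO.refl t⟩⟩
    · rintro ⟨p, hp, h⟩
      obtain ⟨t, ht, hr⟩ := h p rfl
      exact ⟨t, ht, hP hp hr⟩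
  rw [this]
  exact isOpen_biUnion fun p _ => isOpen_VF [p]

/-- The Hoare powerspace of a WQO is Noetherian. -/
theorem noetherian (hw : ∀ f : ℕ → S, ∃ i j, i < j ∧ f i ≼ f j) :
    TopologicalSpace.NoetherianSpace (HQ S) := by
  refine wellFoundedGT_iff_monotone_chain_condition.mpr ?_
  intro c
  by_contra hcon
  push_neg at hcon
  have hstep : ∀ n, ∃ m, n < m ∧ c n < c m := by
    intro n
    obtain ⟨m, hnm, hne⟩ := hcon n
    have hlt : c n < c m := lt_of_le_of_ne (c.monotone hnm) hne
    refine ⟨m, lt_of_le_of_ne hnm ?_, hlt⟩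
    rintro rfl; exact hne rfl
  choose g hg1 hg2 using hstep
  set idx : ℕ → ℕ := fun k => Nat.rec 0 (fun _ p => g p) k with hidx
  have hidxmono : StrictMono idx := strictMono_nat_of_lt_succ fun n => hg1 _
  have hlt : ∀ k, c (idx k) < c (idx (k + 1)) := fun k => hg2 _
  have hTk : ∀ k, ∃ T : HQ S, T ∈ (c (idx (k + 1)) : Set (HQ S)) ∧
      T ∉ (c (idx k) : Set (HQ S)) := by
    intro k
    obtain ⟨x, hx1, hx2⟩ := SetLike.exists_of_lt (hlt k)
    exact ⟨x, hx1, hx2⟩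
  choose T hT1 hT2 using hTk
  have hbasic : ∀ k, ∃ l : List S, T k ∈ VF l ∧ VF l ⊆ (c (idx (k + 1)) : Set (HQ S)) :=
    fun k => exists_VF (c (idx (k + 1))).isOpen (hT1 k)
  choose l hl1 hl2 using hbasic
  haveI : IsRefl S QO.rel := ⟨QO.refl⟩
  haveI : IsTrans S QO.rel := ⟨fun a b c hab hbc => QO.trans hab hbc⟩
  have hpwo : (Set.univ : Set S).PartiallyWellOrderedOn QO.rel := fun f => hw (fun n => (f n).1)
  haveI : IsPreorder S QO.rel := { refl := QO.refl, trans := fun a b c hab hbc => QO.trans hab hbc }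
  have H := hpwo.partiallyWellOrderedOn_sublistForall₂
  obtain ⟨i, j, hij, hsf⟩ := H (fun n => ⟨l n, fun x _ => Set.mem_univ x⟩)
  have h1 : T j ∈ VF (l i) := VF_anti hsf (hl1 j)
  have h2 : VF (l i) ⊆ (c (idx j) : Set (HQ S)) := by
    refine (hl2 i).trans ?_
    exact fun x hx => c.monotone (hidxmono.monotone (Nat.succ_le_of_lt hij)) hx
  exact hT2 j (h2 h1)

/-- Determinized step map via a post relation. -/
def stepH (post : S → Set S) (T : HQ S) : HQ S :=
  HQ.mk {x | ∃ t ∈ toSet T, x ∈ post t}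

theorem continuous_stepH (post : S → Set S)
    (hsim : ∀ ⦃s t⦄, s ≼ t → ∀ ⦃x⦄, x ∈ post s → ∃ y ∈ post t, x ≼ y) :
    Continuous (stepH post) := by
  rw [continuous_def]
  suffices h : ∀ O : Set (HQ S), TopologicalSpace.GenerateOpen (gens S) O →
      IsOpen (stepH post ⁻¹' O) by
    intro O hO; exact h O (isOpen_iff_generate.1 hO)
  intro O hO
  induction hO with
  | basic O hO =>
      rcases hO with ⟨l, rfl⟩
      have : stepH post ⁻¹' VF l = ⋂ s ∈ {x | x ∈ l}, dia {t | ∃ x ∈ post t, s ≼ x} := by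
        ext T
        simp only [Set.mem_preimage, VF, Set.mem_setOf_eq, Set.mem_iInter, dia]
        constructor
        · intro h s hs
          obtain ⟨x, hx, hr⟩ := h s hs
          obtain ⟨t, ht, hxt⟩ := hx
          exact ⟨t, ht, x, hxt, hr⟩
        · intro h s hs
          obtain ⟨t, ht, x, hx, hr⟩ := h s hs
          exact ⟨x, ⟨t, ht, hx⟩, hr⟩
      rw [this]
      refine Set.Finite.isOpen_biInter (List.finite_toSet l) fun s _ => ?_
      refine isOpen_dia ?_
      rintro t t' ⟨x, hx, hr⟩ htt'
      obtain ⟨y, hy, hxy⟩ := hsim htt' hx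
      exact ⟨y, hy, QO.trans hr hxy⟩
  | univ => simp only [Set.preimage_univ]; exact isOpen_univ
  | inter O1 O2 _ _ ih1 ih2 => rw [Set.preimage_inter]; exact ih1.inter ih2
  | sUnion K _ ih =>
      rw [Set.preimage_sUnion]
      exact isOpen_biUnion fun O hO => ih O hO

end HQ

open WSTSSep.HQ

lemma sum_wqo {S1 S2 : Type} {r1 : S1 → S1 → Prop} {r2 : S2 → S2 → Prop}
    (h1 : ∀ f : ℕ → S1, ∃ i j, i < j ∧ r1 (f i) (f j))
    (h2 : ∀ f : ℕ → S2, ∃ i j, i < j ∧ r2 (f i) (f j)) :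
    ∀ f : ℕ → S1 ⊕ S2, ∃ i j, i < j ∧ Sum.LiftRel r1 r2 (f i) (f j) := by
  intro f
  by_cases hinf : {n | ∃ s, f n = Sum.inl s}.Infinite
  · have hm : ∀ k, ∃ s, f (Nat.nth (fun n => ∃ s, f n = Sum.inl s) k) = Sum.inl s :=
      fun k => Nat.nth_mem_of_infinite hinf k
    choose e he using hm
    obtain ⟨i, j, hij, hr⟩ := h1 e
    exact ⟨_, _, Nat.nth_strictMono hinf hij, by rw [he i, he j]; exact .inl hr⟩
  · have hinf' : {n | ∃ s, f n = Sum.inr s}.Infinite := by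
      refine ((Set.not_infinite.mp hinf).infinite_compl).mono ?_
      intro n hn
      cases h : f n with
      | inl a => exact absurd ⟨a, h⟩ hn
      | inr b => exact ⟨b, h⟩
    have hm : ∀ k, ∃ s, f (Nat.nth (fun n => ∃ s, f n = Sum.inr s) k) = Sum.inr s :=
      fun k => Nat.nth_mem_of_infinite hinf' k
    choose e he using hm
    obtain ⟨i, j, hij, hr⟩ := h2 e
    exact ⟨_, _, Nat.nth_strictMono hinf' hij, by rw [he i, he j]; exact .inr hr⟩

section Main

variable {A : Type} (U1 U2 : ULTS A)

instance sumQO : QO (U1.S ⊕ U2.S) where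
  rel := Sum.LiftRel U1.le U2.le
  refl s := by cases s with
    | inl s => exact .inl (U1.le_refl s)
    | inr s => exact .inr (U2.le_refl s)
  trans {a b c} h1 h2 := by
    cases h1 with
    | inl h1 => cases h2 with
      | inl h2 => exact .inl (U1.le_trans h1 h2)
    | inr h1 => cases h2 with
      | inr h2 => exact .inr (U2.le_trans h1 h2)

/-- The joint one-step relation on the sum of state spaces. -/
def post (a : A) : (U1.S ⊕ U2.S) → Set (U1.S ⊕ U2.S) :=
  Sum.elim (fun s => Sum.inl '' U1.tr s a) (fun s => Sum.inr '' U2.tr s a)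

/-- The determinized step function on the Hoare powerspace. -/
def FH (a : A) : HQ (U1.S ⊕ U2.S) → HQ (U1.S ⊕ U2.S) := HQ.stepH (post U1 U2 a)

def T0 : HQ (U1.S ⊕ U2.S) := HQ.mk (Sum.inl '' U1.init ∪ Sum.inr '' U2.init)

/-- The joint determinized trajectory. -/
def traj (w : List A) : HQ (U1.S ⊕ U2.S) := w.foldl (fun T a => FH U1 U2 a T) (T0 U1 U2)

lemma post_sim (a : A) : ∀ ⦃s t⦄, QO.rel s t → ∀ ⦃x⦄, x ∈ post U1 U2 a s →
    ∃ y ∈ post U1 U2 a t, QO.rel x y := by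
  intro s t hst x hx
  cases hst with
  | inl h =>
      obtain ⟨x', hx', rfl⟩ := hx
      obtain ⟨y', hy', hr⟩ := U1.sim a h hx'
      exact ⟨Sum.inl y', ⟨y', hy', rfl⟩, .inl hr⟩
  | inr h =>
      obtain ⟨x', hx', rfl⟩ := hx
      obtain ⟨y', hy', hr⟩ := U2.sim a h hx'
      exact ⟨Sum.inr y', ⟨y', hy', rfl⟩, .inr hr⟩

lemma FH_mk (a : A) (P : Set U1.S) (Q : Set U2.S) :
    FH U1 U2 a (HQ.mk (Sum.inl '' P ∪ Sum.inr '' Q)) =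
      HQ.mk (Sum.inl '' U1.stepSet P a ∪ Sum.inr '' U2.stepSet Q a) := by
  refine congrArg HQ.mk ?_
  ext x
  constructor
  · rintro ⟨t, ht, hx⟩
    rcases ht with ⟨s, hs, rfl⟩ | ⟨s, hs, rfl⟩
    · obtain ⟨u, hu, rfl⟩ := hx
      exact Or.inl ⟨u, Set.mem_biUnion hs hu, rfl⟩
    · obtain ⟨u, hu, rfl⟩ := hx
      exact Or.inr ⟨u, Set.mem_biUnion hs hu, rfl⟩
  · rintro (⟨u, hu, rfl⟩ | ⟨u, hu, rfl⟩)
    · obtain ⟨s, hs, hu'⟩ := Set.mem_iUnion₂.1 hu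
      exact ⟨Sum.inl s, Or.inl ⟨s, hs, rfl⟩, ⟨u, hu', rfl⟩⟩
    · obtain ⟨s, hs, hu'⟩ := Set.mem_iUnion₂.1 hu
      exact ⟨Sum.inr s, Or.inr ⟨s, hs, rfl⟩, ⟨u, hu', rfl⟩⟩

lemma traj_eq (w : List A) :
    traj U1 U2 w = HQ.mk (Sum.inl '' (U1.reachSet U1.init w) ∪
      Sum.inr '' (U2.reachSet U2.init w)) := by
  suffices h : ∀ (w : List A) (P : Set U1.S) (Q : Set U2.S),
      w.foldl (fun T a => FH U1 U2 a T) (HQ.mk (Sum.inl '' P ∪ Sum.inr '' Q)) =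
      HQ.mk (Sum.inl '' (U1.reachSet P w) ∪ Sum.inr '' (U2.reachSet Q w)) from
    h w U1.init U2.init
  intro w
  induction w with
  | nil => intro P Q; rfl
  | cons a w ih =>
      intro P Q
      show List.foldl _ (FH U1 U2 a (HQ.mk _)) w = _
      rw [FH_mk]
      exact ih (U1.stepSet P a) (U2.stepSet Q a)

lemma traj_append (w : List A) (a : A) :
    traj U1 U2 (w ++ [a]) = FH U1 U2 a (traj U1 U2 w) := by
  simp [traj, List.foldl_append]

def Acc1 : Set (HQ (U1.S ⊕ U2.S)) := HQ.dia (Sum.inl '' U1.final)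
def Acc2 : Set (HQ (U1.S ⊕ U2.S)) := HQ.dia (Sum.inr '' U2.final)

lemma isOpen_Acc1 : IsOpen (Acc1 U1 U2) := by
  refine HQ.isOpen_dia ?_
  rintro s t ⟨u, hu, rfl⟩ h
  cases h with
  | inl h => exact ⟨_, U1.final_up hu h, rfl⟩

lemma isOpen_Acc2 : IsOpen (Acc2 U1 U2) := by
  refine HQ.isOpen_dia ?_
  rintro s t ⟨u, hu, rfl⟩ h
  cases h with
  | inr h => exact ⟨_, U2.final_up hu h, rfl⟩

lemma mem_Acc1 (w : List A) : traj U1 U2 w ∈ Acc1 U1 U2 ↔ w ∈ U1.lang := by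
  rw [traj_eq]
  constructor
  · rintro ⟨t, ht, u, hu, rfl⟩
    rcases ht with ⟨s, hs, heq⟩ | ⟨s, hs, heq⟩
    · rw [Sum.inl.injEq] at heq; subst heq; exact ⟨s, hs, hu⟩
    · exact (Sum.inr_ne_inl heq).elim
  · rintro ⟨s, hs, hf⟩
    exact ⟨Sum.inl s, Or.inl ⟨s, hs, rfl⟩, s, hf, rfl⟩

lemma mem_Acc2 (w : List A) : traj U1 U2 w ∈ Acc2 U1 U2 ↔ w ∈ U2.lang := by
  rw [traj_eq]
  constructor
  · rintro ⟨t, ht, u, hu, rfl⟩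
    rcases ht with ⟨s, hs, heq⟩ | ⟨s, hs, heq⟩
    · exact (Sum.inl_ne_inr heq).elim
    · rw [Sum.inr.injEq] at heq; subst heq; exact ⟨s, hs, hu⟩
  · rintro ⟨s, hs, hf⟩
    exact ⟨Sum.inr s, Or.inr ⟨s, hs, rfl⟩, s, hf, rfl⟩

theorem main (h1 : U1.IsWQO) (h2 : U2.IsWQO)
    (hd : U1.lang ∩ U2.lang = ∅) : RegSep U1.lang U2.lang := by
  classical
  haveI : TopologicalSpace.NoetherianSpace (HQ (U1.S ⊕ U2.S)) :=
    HQ.noetherian (sum_wqo h1 h2)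
  set TrajSet : Set (HQ (U1.S ⊕ U2.S)) := Set.range (traj U1 U2) with hTrajSet
  set D : TopologicalSpace.Closeds (HQ (U1.S ⊕ U2.S)) :=
    ⟨closure TrajSet, isClosed_closure⟩ with hD
  obtain ⟨𝒮, hirr, hsup⟩ := TopologicalSpace.NoetherianSpace.exists_finset_irreducible D
  -- membership in D gives membership in some irreducible component
  have hmemD : ∀ x ∈ (D : Set (HQ (U1.S ⊕ U2.S))), ∃ C ∈ 𝒮, x ∈ (C : Set (HQ (U1.S ⊕ U2.S))) := by
    intro x hx
    rw [hsup] at hx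
    rw [TopologicalSpace.Closeds.coe_finset_sup] at hx
    rw [Finset.sup_set_eq_biUnion] at hx
    simpa using hx
  have hCD : ∀ C ∈ 𝒮, (C : Set (HQ (U1.S ⊕ U2.S))) ⊆ (D : Set (HQ (U1.S ⊕ U2.S))) := by
    intro C hC
    have : C ≤ 𝒮.sup id := Finset.le_sup (f := id) hC
    rw [← hsup] at this
    exact this
  -- the trajectory stays in D
  have htrajD : ∀ w, traj U1 U2 w ∈ (D : Set (HQ (U1.S ⊕ U2.S))) :=
    fun w => subset_closure ⟨w, rfl⟩
  -- D is invariant under the determinized step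
  have hinv : ∀ a : A, FH U1 U2 a '' (D : Set (HQ (U1.S ⊕ U2.S))) ⊆
      (D : Set (HQ (U1.S ⊕ U2.S))) := by
    intro a
    have hc : Continuous (FH U1 U2 a) := HQ.continuous_stepH _ (post_sim U1 U2 a)
    refine (image_closure_subset_closure_image hc).trans ?_
    refine closure_minimal ?_ isClosed_closure
    rintro x ⟨y, ⟨w, rfl⟩, rfl⟩
    exact subset_closure ⟨w ++ [a], traj_append U1 U2 w a⟩
  -- transition function: the closure of the image of an irreducible piece
  -- is irreducible and contained in D, hence in some piece
  have hstep : ∀ C ∈ 𝒮, ∀ a : A, ∃ C' ∈ 𝒮,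
      FH U1 U2 a '' (C : Set (HQ (U1.S ⊕ U2.S))) ⊆ (C' : Set (HQ (U1.S ⊕ U2.S))) := by
    intro C hC a
    have hic : IsIrreducible (C : Set (HQ (U1.S ⊕ U2.S))) := hirr ⟨C, hC⟩
    have hc : Continuous (FH U1 U2 a) := HQ.continuous_stepH _ (post_sim U1 U2 a)
    have hz : IsIrreducible (closure (FH U1 U2 a '' (C : Set (HQ (U1.S ⊕ U2.S))))) :=
      ((hic.image _ hc.continuousOn)).closure
    have hzD : closure (FH U1 U2 a '' (C : Set (HQ (U1.S ⊕ U2.S)))) ⊆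
        (D : Set (HQ (U1.S ⊕ U2.S))) := by
      refine closure_minimal ?_ D.2
      exact (Set.image_mono (hCD C hC)).trans (hinv a)
    have hcov : closure (FH U1 U2 a '' (C : Set (HQ (U1.S ⊕ U2.S)))) ⊆
        ⋃₀ ↑(𝒮.image (fun C : TopologicalSpace.Closeds (HQ (U1.S ⊕ U2.S)) => SetLike.coe C)) := by
      intro x hx
      obtain ⟨C', hC', hxC'⟩ := hmemD x (hzD hx)
      exact Set.mem_sUnion.2 ⟨(C' : Set (HQ (U1.S ⊕ U2.S))),
        Finset.mem_coe.2 (Finset.mem_image.2 ⟨C', hC', rfl⟩), hxC'⟩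
    have hclosed : ∀ z ∈ 𝒮.image (fun C : TopologicalSpace.Closeds (HQ (U1.S ⊕ U2.S)) => SetLike.coe C), IsClosed z := by
      intro z hzm
      rw [Finset.mem_image] at hzm
      obtain ⟨C', hC', rfl⟩ := hzm
      exact C'.2
    obtain ⟨z, hz1, hz2⟩ := (isIrreducible_iff_sUnion_isClosed.1 hz)
      (𝒮.image (fun C : TopologicalSpace.Closeds (HQ (U1.S ⊕ U2.S)) => SetLike.coe C)) hclosed hcov
    simp only [Finset.mem_image] at hz1
    obtain ⟨C', hC', rfl⟩ := hz1
    exact ⟨C', hC', subset_closure.trans hz2⟩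
  choose δ hδ1 hδ2 using hstep
  -- start state
  obtain ⟨C0, hC0, hC0mem⟩ := hmemD _ (htrajD [])
  -- the DFA
  let σ := {C : TopologicalSpace.Closeds (HQ (U1.S ⊕ U2.S)) // C ∈ 𝒮}
  let M : DFA A σ :=
    { step := fun q a => ⟨δ q.1 q.2 a, hδ1 q.1 q.2 a⟩
      start := ⟨C0, hC0⟩
      accept := {q | ((q.1 : Set (HQ (U1.S ⊕ U2.S))) ∩ Acc1 U1 U2).Nonempty} }
  -- invariant: the trajectory lies in the current state
  have hinvar : ∀ w, traj U1 U2 w ∈ ((M.eval w).1 : Set (HQ (U1.S ⊕ U2.S))) := by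
    intro w
    induction w using List.reverseRecOn with
    | nil => exact hC0mem
    | append_singleton w a ih =>
        rw [DFA.eval_append_singleton, traj_append]
        exact hδ2 (M.eval w).1 (M.eval w).2 a ⟨traj U1 U2 w, ih, rfl⟩
  refine ⟨M.accepts, ⟨σ, inferInstance, M, rfl⟩, ?_, ?_⟩
  · -- U1.lang ⊆ accepts
    intro w hw
    change M.eval w ∈ M.accept
    exact ⟨traj U1 U2 w, hinvar w, (mem_Acc1 U1 U2 w).2 hw⟩
  · -- accepts ∩ U2.lang = ∅
    rw [Set.eq_empty_iff_forall_notMem]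
    rintro w ⟨hwR, hwL2⟩
    change M.eval w ∈ M.accept at hwR
    have hC := (M.eval w).2
    have hic : IsIrreducible ((M.eval w).1 : Set (HQ (U1.S ⊕ U2.S))) := hirr ⟨_, hC⟩
    have h2' : (((M.eval w).1 : Set (HQ (U1.S ⊕ U2.S))) ∩ Acc2 U1 U2).Nonempty :=
      ⟨traj U1 U2 w, hinvar w, (mem_Acc2 U1 U2 w).2 hwL2⟩
    have hnon := hic.2 (Acc1 U1 U2) (Acc2 U1 U2) (isOpen_Acc1 U1 U2) (isOpen_Acc2 U1 U2)
      hwR h2'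
    obtain ⟨T, hT, hT1, hT2⟩ := hnon
    -- T is in D but D misses the open set Acc1 ∩ Acc2
    have hTD : T ∈ (D : Set (HQ (U1.S ⊕ U2.S))) := hCD _ hC hT
    have hmiss : (D : Set (HQ (U1.S ⊕ U2.S))) ⊆ (Acc1 U1 U2 ∩ Acc2 U1 U2)ᶜ := by
      refine closure_minimal ?_ (((isOpen_Acc1 U1 U2).inter (isOpen_Acc2 U1 U2)).isClosed_compl)
      rintro x ⟨w', rfl⟩ ⟨hx1, hx2⟩
      have : w' ∈ U1.lang ∩ U2.lang :=
        ⟨(mem_Acc1 U1 U2 w').1 hx1, (mem_Acc2 U1 U2 w').1 hx2⟩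
      rw [hd] at this
      exact this
    exact hmiss hTD ⟨hT1, hT2⟩

end Main
end WSTSSep


/-- For languages `L₁, L₂` over a finite alphabet, each accepted by
some upward-compatible WSTS, regular separability holds iff `L₁ ∩ L₂ = ∅`. -/
theorem wsts_regular_separability {A : Type} [Finite A] (L1 L2 : Set (List A))
    (h1 : ∃ U : ULTS A, U.IsWQO ∧ U.lang = L1)
    (h2 : ∃ U : ULTS A, U.IsWQO ∧ U.lang = L2) :
    RegSep L1 L2 ↔ L1 ∩ L2 = ∅ := by
  constructor
  · rintro ⟨R, _, hsub, hint⟩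
    rw [Set.eq_empty_iff_forall_notMem]
    rintro w ⟨hw1, hw2⟩
    have : w ∈ R ∩ L2 := ⟨hsub hw1, hw2⟩
    rw [hint] at this
    exact this
  · intro hd
    obtain ⟨U1, hw1, rfl⟩ := h1
    obtain ⟨U2, hw2, rfl⟩ := h2
    exact WSTSSep.main U1 U2 hw1 hw2 hd
end

section
/- Let U and U' be ULTSes over the same finite alphabet Σ, at least one of which is deterministic. If the synchronized product U × U' admits a finitely-represented inductive invariant, then L(U) and L(U') are regularly separable. -/
namespace ULTS

variable {A : Type}

/-- Downward closure of a set of states. -/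
def dcl (U : ULTS A) (Q : Set U.S) : Set U.S := {s | ∃ q ∈ Q, U.le s q}

/-- A set of states is downward closed. -/
def DownClosed (U : ULTS A) (X : Set U.S) : Prop :=
  ∀ ⦃s t⦄, U.le s t → t ∈ X → s ∈ X

/-- An inductive invariant: a downward-closed set of states containing the initial
states, disjoint from the final states, and closed under the transition relation. -/
def InductiveInvariant (U : ULTS A) (X : Set U.S) : Prop :=
  U.DownClosed X ∧ U.init ⊆ X ∧ U.final ∩ X = ∅ ∧ ∀ a, U.stepSet X a ⊆ X

/-- An inductive invariant is finitely represented if it is the downward closure of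
a finite set of states. -/
def FinRepInvariant (U : ULTS A) : Prop :=
  ∃ Q : Set U.S, Q.Finite ∧ U.InductiveInvariant (U.dcl Q)

/-- Synchronized product of two ULTS: states are pairs with the product order,
transitions synchronize on the common letter. -/
def prod (U V : ULTS A) : ULTS A where
  S := U.S × V.S
  le p q := U.le p.1 q.1 ∧ V.le p.2 q.2
  le_refl p := ⟨U.le_refl _, V.le_refl _⟩
  le_trans _ _ _ h1 h2 := ⟨U.le_trans h1.1 h2.1, V.le_trans h1.2 h2.2⟩
  init := U.init ×ˢ V.init
  tr p a := U.tr p.1 a ×ˢ V.tr p.2 a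
  final := U.final ×ˢ V.final
  final_up := by
    rintro ⟨s1, s2⟩ ⟨t1, t2⟩ ⟨hf1, hf2⟩ ⟨h1, h2⟩
    exact ⟨U.final_up hf1 h1, V.final_up hf2 h2⟩
  sim := by
    rintro ⟨s1, s2⟩ ⟨t1, t2⟩ a ⟨s1', s2'⟩ ⟨h1, h2⟩ ⟨hm1, hm2⟩
    obtain ⟨t1', ht1, hle1⟩ := U.sim a h1 hm1
    obtain ⟨t2', ht2, hle2⟩ := V.sim a h2 hm2
    exact ⟨(t1', t2'), ⟨ht1, ht2⟩, hle1, hle2⟩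

end ULTS

namespace RegSepAux

open ULTS

variable {A : Type}

lemma reachSet_det (V : ULTS A) (f : V.S → A → V.S)
    (hf : ∀ s a, V.tr s a = {f s a}) :
    ∀ (w : List A) (s : V.S), V.reachSet {s} w = {w.foldl f s} := by
  intro w
  induction w with
  | nil => intro s; rfl
  | cons a w ih =>
    intro s
    have hstep : V.stepSet {s} a = {f s a} := by
      simp [ULTS.stepSet, hf]
    simp only [ULTS.reachSet, hstep, ih, List.foldl_cons]

lemma regSep_symm {L1 L2 : Set (List A)} (h : RegSep L1 L2) : RegSep L2 L1 := by
  obtain ⟨R, ⟨Qt, hFt, M, hM⟩, hsub, hdisj⟩ := h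
  refine ⟨Rᶜ, ⟨Qt, hFt, ⟨M.step, M.start, M.acceptᶜ⟩, ?_⟩, ?_, ?_⟩
  · ext x
    have : x ∈ M.accepts ↔ M.eval x ∈ M.accept := M.mem_accepts
    rw [hM] at this
    exact (not_iff_not.mpr this).symm
  · intro w hw
    intro hwR
    have : w ∈ R ∩ L2 := ⟨hwR, hw⟩
    rw [hdisj] at this
    exact this
  · apply Set.eq_empty_iff_forall_notMem.mpr
    rintro w ⟨hwc, hw1⟩
    exact hwc (hsub hw1)

lemma finRep_swap (U V : ULTS A) (h : (U.prod V).FinRepInvariant) :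
    (V.prod U).FinRepInvariant := by
  obtain ⟨Q, hfin, hdc, hinit, hfinal, hstep⟩ := h
  have hmem : ∀ s : V.S × U.S,
      s ∈ (V.prod U).dcl (Prod.swap '' Q) ↔ s.swap ∈ (U.prod V).dcl Q := by
    intro s
    constructor
    · rintro ⟨q', ⟨q, hq, rfl⟩, hle⟩
      exact ⟨q, hq, hle.2, hle.1⟩
    · rintro ⟨q, hq, hle⟩
      exact ⟨q.swap, ⟨q, hq, rfl⟩, hle.2, hle.1⟩
  refine ⟨Prod.swap '' Q, hfin.image _, ?_, ?_, ?_, ?_⟩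
  · intro s t hle ht
    apply (hmem s).mpr
    replace ht := (hmem t).mp ht
    exact hdc (s := s.swap) (t := t.swap) ⟨hle.2, hle.1⟩ ht
  · rintro ⟨v, u⟩ hvu
    apply (hmem _).mpr
    exact hinit ⟨hvu.2, hvu.1⟩
  · apply Set.eq_empty_iff_forall_notMem.mpr
    rintro s ⟨hsF, hsX⟩
    replace hsX := (hmem s).mp hsX
    have : s.swap ∈ (U.prod V).final ∩ (U.prod V).dcl Q := ⟨⟨hsF.2, hsF.1⟩, hsX⟩
    rw [hfinal] at this
    exact this
  · intro a s' hs'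
    apply (hmem _).mpr
    obtain ⟨s, hs, htr⟩ := Set.mem_iUnion₂.mp hs'
    replace hs := (hmem s).mp hs
    apply hstep a
    exact Set.mem_iUnion₂.mpr ⟨s.swap, hs, htr.2, htr.1⟩

/-- Main lemma: second system deterministic. -/
lemma regSep_of_det_right (U V : ULTS A) (hdet : V.Deterministic)
    (hinv : (U.prod V).FinRepInvariant) : RegSep U.lang V.lang := by
  classical
  obtain ⟨⟨v0, hv0⟩, hdf⟩ := hdet
  choose f hf using hdf
  obtain ⟨Q, hQfin, hdc, hinit, hfin, hstep⟩ := hinv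
  haveI : Finite Q := hQfin.to_subtype
  let M : DFA A (Set Q) :=
    { step := fun P a => {q' | ∃ q ∈ P, ∃ p ∈ (U.prod V).tr q.1 a, (U.prod V).le p q'.1}
      start := {q | ∃ i ∈ (U.prod V).init, (U.prod V).le i q.1}
      accept := {P | ∃ q ∈ P, q.1.1 ∈ U.final} }
  -- helper: anything in (U.prod V).dcl Q has a bound in Q
  have hdclQ : ∀ {p : (U.prod V).S}, p ∈ (U.prod V).dcl Q →
      ∃ q : Q, (U.prod V).le p q.1 := by
    rintro p ⟨q, hq, hle⟩
    exact ⟨⟨q, hq⟩, hle⟩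
  -- the two key invariants
  have key : ∀ (w : List A) (P : Set Q) (Su : Set U.S) (v : V.S),
      (∀ q ∈ P, V.le v q.1.2) →
      (∀ u ∈ Su, ∃ q ∈ P, U.le u q.1.1 ∧ V.le v q.1.2) →
      (∀ q ∈ M.evalFrom P w, V.le (w.foldl f v) q.1.2) ∧
      (∀ u ∈ U.reachSet Su w, ∃ q ∈ M.evalFrom P w,
        U.le u q.1.1 ∧ V.le (w.foldl f v) q.1.2) := by
    intro w
    induction w with
    | nil => intro P Su v hB hA; exact ⟨hB, hA⟩
    | cons a w ih =>
      intro P Su v hB hA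
      have hB' : ∀ q' ∈ M.step P a, V.le (f v a) q'.1.2 := by
        rintro q' ⟨q, hqP, p, hp, hle⟩
        have hp2 : p.2 ∈ V.tr q.1.2 a := hp.2
        rw [hf] at hp2
        obtain ⟨t', ht', hlt⟩ := V.sim a (hB q hqP)
          (show f v a ∈ V.tr v a by rw [hf]; exact rfl)
        rw [hf] at ht'
        rw [Set.mem_singleton_iff] at hp2 ht'
        rw [ht', ← hp2] at hlt
        exact V.le_trans hlt hle.2
      have hA' : ∀ u' ∈ U.stepSet Su a, ∃ q' ∈ M.step P a,
          U.le u' q'.1.1 ∧ V.le (f v a) q'.1.2 := by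
        intro u' hu'
        obtain ⟨u, hu, htr⟩ := Set.mem_iUnion₂.mp hu'
        obtain ⟨q, hqP, hle1, hle2⟩ := hA u hu
        have hmem : ((u', f v a) : (U.prod V).S) ∈ (U.prod V).tr (u, v) a :=
          ⟨htr, by rw [hf]; exact rfl⟩
        obtain ⟨p, hp, hple⟩ := (U.prod V).sim a
          (show (U.prod V).le (u, v) q.1 from ⟨hle1, hle2⟩) hmem
        have hpQ : p ∈ (U.prod V).dcl Q := hstep a (Set.mem_iUnion₂.mpr
          ⟨q.1, ⟨q.1, q.2, (U.prod V).le_refl _⟩, hp⟩)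
        obtain ⟨q', hq'⟩ := hdclQ hpQ
        refine ⟨q', ⟨q, hqP, p, hp, hq'⟩, ?_, ?_⟩
        · exact U.le_trans hple.1 hq'.1
        · exact V.le_trans hple.2 hq'.2
      have := ih (M.step P a) (U.stepSet Su a) (f v a) hB' hA'
      simpa [DFA.evalFrom, ULTS.reachSet] using this
  -- base cases
  have hB0 : ∀ q ∈ M.start, V.le v0 q.1.2 := by
    rintro q ⟨i, hi, hle⟩
    have h2 : i.2 ∈ V.init := hi.2
    rw [hv0, Set.mem_singleton_iff] at h2
    rw [← h2]
    exact hle.2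
  have hA0 : ∀ u ∈ U.init, ∃ q ∈ M.start,
      U.le u q.1.1 ∧ V.le v0 q.1.2 := by
    intro u hu
    have hm : ((u, v0) : (U.prod V).S) ∈ (U.prod V).init :=
      ⟨hu, by rw [hv0]; exact rfl⟩
    obtain ⟨q, hq⟩ := hdclQ (hinit hm)
    exact ⟨q, ⟨(u, v0), hm, hq⟩, hq.1, hq.2⟩
  refine ⟨M.accepts, ⟨Set Q, Fintype.ofFinite _, M, rfl⟩, ?_, ?_⟩
  · rintro w ⟨u, hur, huf⟩
    obtain ⟨-, hcov⟩ := key w M.start U.init v0 hB0 hA0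
    obtain ⟨q, hq, hle1, -⟩ := hcov u hur
    exact M.mem_accepts.mpr ⟨q, hq, U.final_up huf hle1⟩
  · apply Set.eq_empty_iff_forall_notMem.mpr
    rintro w ⟨hwR, hwV⟩
    obtain ⟨q, hq, hqF⟩ := M.mem_accepts.mp hwR
    obtain ⟨hinv2, -⟩ := key w M.start U.init v0 hB0 hA0
    have hvle := hinv2 q hq
    obtain ⟨v, hvr, hvF⟩ := hwV
    rw [hv0, reachSet_det V f hf, Set.mem_singleton_iff] at hvr
    rw [hvr] at hvF
    have hq2F : q.1.2 ∈ V.final := V.final_up hvF hvle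
    have hcontra : q.1 ∈ (U.prod V).final ∩ (U.prod V).dcl Q :=
      ⟨⟨hqF, hq2F⟩, ⟨q.1, q.2, (U.prod V).le_refl _⟩⟩
    rw [hfin] at hcontra
    exact hcontra

end RegSepAux

/-- If one of two ULTS is deterministic and their synchronized
product admits a finitely-represented inductive invariant, then their languages
are regularly separable. -/
theorem finRepInvariant_regSep {A : Type} [Finite A] (U V : ULTS A)
    (hdet : U.Deterministic ∨ V.Deterministic)
    (hinv : (U.prod V).FinRepInvariant) :
    RegSep U.lang V.lang := by
  rcases hdet with hU | hV
  · exact RegSepAux.regSep_symm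
      (RegSepAux.regSep_of_det_right V U hU (RegSepAux.finRep_swap U V hinv))
  · exact RegSepAux.regSep_of_det_right U V hV hinv
end

section
/- Let U = (S, ≤, I, δ, F) be a ULTS over a finite alphabet Σ. Define det(U) as the LTS whose states are the downward-closed subsets of S ordered by inclusion, with unique initial state ↓I, transition function det(δ)(D,a) = ↓(δ(D,a)), and final states the downward-closed sets that intersect F. Then det(U) is a deterministic ULTS and L(det(U)) = L(U). -/
namespace ULTS

variable {A : Type}

lemma dcl_downClosed (U : ULTS A) (Q : Set U.S) : U.DownClosed (U.dcl Q) := by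
  rintro s t hst ⟨q, hq, htq⟩
  exact ⟨q, hq, U.le_trans hst htq⟩

lemma dcl_mono (U : ULTS A) {P Q : Set U.S} (h : P ⊆ Q) : U.dcl P ⊆ U.dcl Q := by
  rintro s ⟨q, hq, hsq⟩
  exact ⟨q, h hq, hsq⟩

lemma stepSet_mono (U : ULTS A) {P Q : Set U.S} (h : P ⊆ Q) (a : A) :
    U.stepSet P a ⊆ U.stepSet Q a := by
  intro s hs
  simp only [stepSet, Set.mem_iUnion] at hs ⊢
  obtain ⟨t, ht, hst⟩ := hs
  exact ⟨t, h ht, hst⟩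

/-- The determinization of a ULTS: states are the downward-closed subsets of the
original states ordered by inclusion, the unique initial state is `↓I`, the
transition function is `det(δ)(D, a) = ↓(δ(D, a))`, and the final states are the
downward-closed sets intersecting `F`. -/
def det (U : ULTS A) : ULTS A where
  S := {D : Set U.S // U.DownClosed D}
  le D E := D.1 ⊆ E.1
  le_refl _ := subset_rfl
  le_trans _ _ _ h1 h2 := h1.trans h2
  init := {⟨U.dcl U.init, U.dcl_downClosed _⟩}
  tr D a := {⟨U.dcl (U.stepSet D.1 a), U.dcl_downClosed _⟩}
  final := {D | (D.1 ∩ U.final).Nonempty}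
  final_up := by
    rintro D E ⟨s, hsD, hsF⟩ hDE
    exact ⟨s, hDE hsD, hsF⟩
  sim := by
    rintro D E a D' hDE hD'
    refine ⟨⟨U.dcl (U.stepSet E.1 a), U.dcl_downClosed _⟩, Set.mem_singleton _, ?_⟩
    rcases hD' with rfl
    exact U.dcl_mono (U.stepSet_mono hDE a)

end ULTS

namespace ULTS

variable {A : Type}

lemma dcl_step (U : ULTS A) (P : Set U.S) (a : A) :
    U.dcl (U.stepSet (U.dcl P) a) = U.dcl (U.stepSet P a) := by
  apply Set.Subset.antisymm
  · rintro s ⟨s', hs', hss'⟩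
    simp only [stepSet, Set.mem_iUnion] at hs'
    obtain ⟨q, ⟨p, hp, hqp⟩, hs'q⟩ := hs'
    obtain ⟨t', ht', hst'⟩ := U.sim a hqp hs'q
    refine ⟨t', ?_, U.le_trans hss' hst'⟩
    simp only [stepSet, Set.mem_iUnion]
    exact ⟨p, hp, ht'⟩
  · exact U.dcl_mono (U.stepSet_mono (show P ⊆ U.dcl P from fun s hs => ⟨s, hs, U.le_refl s⟩) a)

lemma det_reach (U : ULTS A) (w : List A) : ∀ (P : Set U.S),
    U.det.reachSet {⟨U.dcl P, U.dcl_downClosed P⟩} w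
      = {⟨U.dcl (U.reachSet P w), U.dcl_downClosed _⟩} := by
  induction w with
  | nil => intro P; rfl
  | cons a w ih =>
    intro P
    have hstep : U.det.stepSet {⟨U.dcl P, U.dcl_downClosed P⟩} a
        = {⟨U.dcl (U.stepSet P a), U.dcl_downClosed _⟩} := by
      ext D
      simp only [stepSet, Set.mem_iUnion, Set.mem_singleton_iff]
      constructor
      · rintro ⟨E, rfl, hD⟩
        simp only [det] at hD
        rw [hD]
        exact Subtype.ext (U.dcl_step P a)
      · rintro rfl
        refine ⟨_, rfl, ?_⟩
        simp only [det, Set.mem_singleton_iff]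
        exact (Subtype.ext (U.dcl_step P a)).symm
    show U.det.reachSet (U.det.stepSet _ a) w = _
    rw [hstep, ih (U.stepSet P a)]
    rfl

lemma dcl_inter_final (U : ULTS A) (Q : Set U.S) :
    (U.dcl Q ∩ U.final).Nonempty ↔ (Q ∩ U.final).Nonempty := by
  constructor
  · rintro ⟨s, ⟨q, hq, hsq⟩, hsF⟩
    exact ⟨q, hq, U.final_up hsF hsq⟩
  · rintro ⟨s, hs, hsF⟩
    exact ⟨s, ⟨s, hs, U.le_refl s⟩, hsF⟩

end ULTS

/-- The determinization `det(U)` of a ULTS `U` is a deterministic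
ULTS accepting the same language as `U`. -/
theorem det_deterministic_lang_eq {A : Type} [Finite A] (U : ULTS A) :
    U.det.Deterministic ∧ U.det.lang = U.lang := by
  constructor
  · exact ⟨⟨_, rfl⟩, fun s a => ⟨_, rfl⟩⟩
  · ext w
    show (U.det.reachSet U.det.init w ∩ U.det.final).Nonempty ↔ _
    have : U.det.init = {⟨U.dcl U.init, U.dcl_downClosed _⟩} := rfl
    rw [this, U.det_reach w U.init]
    constructor
    · rintro ⟨D, hD, hDF⟩
      replace hD := Set.mem_singleton_iff.mp hD; subst hD
      exact (U.dcl_inter_final _).mp hDF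
    · intro h
      exact ⟨_, rfl, (U.dcl_inter_final _).mpr h⟩
end

section
/- For every upward-compatible well-structured transition system U over a finite alphabet Σ, there exists a WSTS U' over Σ with a countable set of states such that L(U') = L(U). -/
namespace ULTS

variable {A : Type}

/-- One-step successors restricted to a set `C`. -/
def stepC (U : ULTS A) (C P : Set U.S) (a : A) : Set U.S := ⋃ s ∈ P, U.tr s a ∩ C

/-- Reachability restricted to a set `C`. -/
def reachC (U : ULTS A) (C P : Set U.S) : List A → Set U.S
  | [] => P
  | a :: w => U.reachC C (U.stepC C P a) w

lemma reachSet_mono (U : ULTS A) :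
    ∀ (w : List A) {P Q : Set U.S}, P ⊆ Q → U.reachSet P w ⊆ U.reachSet Q w
  | [], _, _, h => h
  | a :: w, P, Q, h => by
      refine U.reachSet_mono w ?_
      intro x hx
      simp only [ULTS.stepSet, Set.mem_iUnion] at hx ⊢
      obtain ⟨s, hs, h2⟩ := hx
      exact ⟨s, h hs, h2⟩

lemma reachC_mono (U : ULTS A) (C : Set U.S) :
    ∀ (w : List A) {P Q : Set U.S}, P ⊆ Q → U.reachC C P w ⊆ U.reachC C Q w
  | [], _, _, h => h
  | a :: w, P, Q, h => by
      refine U.reachC_mono C w ?_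
      intro x hx
      simp only [ULTS.stepC, Set.mem_iUnion] at hx ⊢
      obtain ⟨s, hs, h2⟩ := hx
      exact ⟨s, h hs, h2⟩

/-- Extract a finite set of states witnessing one reachability fact. -/
lemma trace (U : ULTS A) :
    ∀ (w : List A) (P : Set U.S) (x : U.S), x ∈ U.reachSet P w →
      ∃ s ∈ P, ∃ T : Set U.S, T.Finite ∧ s ∈ T ∧
        ∀ C, T ⊆ C → x ∈ U.reachC C {s} w
  | [], P, x, hx => ⟨x, hx, {x}, Set.finite_singleton x, rfl, fun C _ => rfl⟩
  | a :: w, P, x, hx => by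
      obtain ⟨s₁, hs₁, T₁, hT₁fin, hs₁T₁, hT₁⟩ := U.trace w (U.stepSet P a) x hx
      simp only [ULTS.stepSet, Set.mem_iUnion] at hs₁
      obtain ⟨s, hsP, hs₁tr⟩ := hs₁
      refine ⟨s, hsP, insert s T₁, hT₁fin.insert s, Set.mem_insert s T₁, ?_⟩
      intro C hC
      show x ∈ U.reachC C (U.stepC C {s} a) w
      refine U.reachC_mono C w ?_ (hT₁ C (fun y hy => hC (Set.mem_insert_of_mem s hy)))
      intro y hy
      rcases hy with rfl
      simp only [ULTS.stepC, Set.mem_iUnion]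
      exact ⟨s, rfl, hs₁tr, hC (Set.mem_insert_of_mem s hs₁T₁)⟩

open Classical in
/-- Canonical simulation witness. -/
noncomputable def simWit (U : ULTS A) (t : U.S) (a : A) (s' : U.S) : U.S :=
  if h : ∃ t', t' ∈ U.tr t a ∧ U.le s' t' then h.choose else s'

lemma simWit_spec (U : ULTS A) {t : U.S} {a : A} {s' : U.S}
    (h : ∃ t', t' ∈ U.tr t a ∧ U.le s' t') :
    U.simWit t a s' ∈ U.tr t a ∧ U.le s' (U.simWit t a s') := by
  rw [ULTS.simWit]
  split
  · next h2 => exact h2.choose_spec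
  · next h2 => exact absurd h h2

/-- Restriction of a ULTS to a simulation-closed set of states. -/
def restrict (U : ULTS A) (C : Set U.S)
    (hC : ∀ s t : C, ∀ (a : A) (s' : C), U.le ↑s ↑t → (s' : U.S) ∈ U.tr ↑s a →
      ∃ t' ∈ C, t' ∈ U.tr ↑t a ∧ U.le ↑s' t') : ULTS A where
  S := C
  le s t := U.le ↑s ↑t
  le_refl s := U.le_refl _
  le_trans _ _ _ h1 h2 := U.le_trans h1 h2
  init := {x | ↑x ∈ U.init}
  tr s a := {y | ↑y ∈ U.tr ↑s a}
  final := {x | ↑x ∈ U.final}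
  final_up _ _ h hle := U.final_up h hle
  sim := by
    rintro s t a s' hle hs'
    obtain ⟨t', ht'C, ht'tr, ht'le⟩ := hC s t a s' hle hs'
    exact ⟨⟨t', ht'C⟩, ht'tr, ht'le⟩

lemma restrict_reach_sub (U : ULTS A) (C : Set U.S) (hC) :
    ∀ (w : List A) (P : Set (U.restrict C hC).S) (x : (U.restrict C hC).S),
      x ∈ (U.restrict C hC).reachSet P w →
        (Subtype.val x : U.S) ∈ U.reachSet (Subtype.val '' P) w
  | [], P, x, hx => ⟨x, hx, rfl⟩
  | a :: w, P, x, hx => by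
      have := U.restrict_reach_sub C hC w ((U.restrict C hC).stepSet P a) x hx
      refine U.reachSet_mono w ?_ this
      rintro y ⟨z, hz, rfl⟩
      simp only [ULTS.stepSet, Set.mem_iUnion] at ⊢
      obtain ⟨s, hsP, hztr⟩ := Set.mem_iUnion₂.mp hz
      exact ⟨Subtype.val s, ⟨s, hsP, rfl⟩, hztr⟩

lemma restrict_reach_sup (U : ULTS A) (C : Set U.S) (hC) :
    ∀ (w : List A) (P : Set U.S), P ⊆ C → ∀ x, x ∈ U.reachC C P w →
      ∃ h : x ∈ C, (⟨x, h⟩ : C) ∈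
        (U.restrict C hC).reachSet {y : (U.restrict C hC).S | Subtype.val y ∈ P} w
  | [], P, hP, x, hx => ⟨hP hx, hx⟩
  | a :: w, P, hP, x, hx => by
      have hsub : U.stepC C P a ⊆ C := by
        intro y hy
        simp only [ULTS.stepC, Set.mem_iUnion] at hy
        obtain ⟨s, _, _, h⟩ := hy
        exact h
      obtain ⟨h, hmem⟩ := U.restrict_reach_sup C hC w (U.stepC C P a) hsub x hx
      refine ⟨h, (U.restrict C hC).reachSet_mono w ?_ hmem⟩
      intro y hy
      simp only [Set.mem_setOf_eq, ULTS.stepC, Set.mem_iUnion] at hy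
      obtain ⟨s, hsP, hytr, _⟩ := hy
      simp only [ULTS.stepSet, Set.mem_iUnion]
      exact ⟨(⟨s, hP hsP⟩ : (U.restrict C hC).S), hsP, hytr⟩

end ULTS


/-- Every upward-compatible WSTS language is accepted by a WSTS
with a countable set of states. -/
theorem wsts_countable_states {A : Type} [Finite A] (U : ULTS A) (hU : U.IsWQO) :
    ∃ V : ULTS A, V.IsWQO ∧ Countable V.S ∧ V.lang = U.lang := by
  classical
  have : Countable A := Finite.to_countable
  -- choose accepting runs for every accepted word
  have key : ∀ w : U.lang, ∃ (s : U.S) (T : Set U.S), s ∈ U.init ∧ T.Finite ∧ s ∈ T ∧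
      ∀ C : Set U.S, T ⊆ C → ∃ x ∈ U.reachC C {s} (w : List A), x ∈ U.final := by
    rintro ⟨w, hw⟩
    obtain ⟨x, hx, hxf⟩ := hw
    obtain ⟨s, hs, T, hTfin, hsT, hT⟩ := U.trace w U.init x hx
    exact ⟨s, T, hs, hTfin, hsT, fun C hCsub => ⟨x, hT C hCsub, hxf⟩⟩
  choose sfun Tfun hinit hTfin hsT hT using key
  -- countable base set, then close under simulation witnesses
  set S0 : Set U.S := ⋃ w, Tfun w with hS0def
  have hS0c : S0.Countable := Set.countable_iUnion fun w => (hTfin w).countable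
  let St : ℕ → Set U.S := fun n => Nat.rec S0
    (fun _ Cn => Cn ∪ (fun p : U.S × A × U.S => U.simWit p.1 p.2.1 p.2.2) ''
      (Cn ×ˢ (Set.univ ×ˢ Cn))) n
  have hStsucc : ∀ n, St (n + 1) = St n ∪
      (fun p : U.S × A × U.S => U.simWit p.1 p.2.1 p.2.2) ''
      (St n ×ˢ (Set.univ ×ˢ St n)) := fun n => rfl
  have hStc : ∀ n, (St n).Countable := by
    intro n
    induction n with
    | zero => exact hS0c
    | succ n ih =>
        rw [hStsucc n]
        exact ih.union ((ih.prod (Set.countable_univ.prod ih)).image _)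
  have hStmono : ∀ m n, m ≤ n → St m ⊆ St n := by
    intro m n h
    induction h with
    | refl => exact fun x hx => hx
    | step _ ih => exact fun x hx => by rw [hStsucc]; exact Or.inl (ih hx)
  set C : Set U.S := ⋃ n, St n with hCdef
  have hCc : C.Countable := Set.countable_iUnion hStc
  have hS0C : S0 ⊆ C := Set.subset_iUnion St 0
  have hclosed : ∀ t ∈ C, ∀ (a : A), ∀ s' ∈ C, U.simWit t a s' ∈ C := by
    intro t ht a s' hs'
    obtain ⟨m, hm⟩ := Set.mem_iUnion.mp ht
    obtain ⟨n, hn⟩ := Set.mem_iUnion.mp hs'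
    have htk : t ∈ St (max m n) := hStmono m _ (le_max_left m n) hm
    have hsk : s' ∈ St (max m n) := hStmono n _ (le_max_right m n) hn
    refine Set.mem_iUnion.mpr ⟨max m n + 1, ?_⟩
    rw [hStsucc]
    exact Or.inr ⟨(t, a, s'), ⟨htk, Set.mem_univ a, hsk⟩, rfl⟩
  have hCsim : ∀ s t : C, ∀ (a : A) (s' : C), U.le ↑s ↑t → (s' : U.S) ∈ U.tr ↑s a →
      ∃ t' ∈ C, t' ∈ U.tr ↑t a ∧ U.le ↑s' t' := by
    rintro s t a s' hle hs'
    have hex : ∃ t', t' ∈ U.tr ↑t a ∧ U.le ↑s' t' := U.sim a hle hs'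
    obtain ⟨h1, h2⟩ := U.simWit_spec hex
    exact ⟨U.simWit ↑t a ↑s', hclosed _ t.2 a _ s'.2, h1, h2⟩
  refine ⟨U.restrict C hCsim, ?_, ?_, ?_⟩
  · intro f
    obtain ⟨i, j, hij, hle⟩ := hU fun n => (f n).1
    exact ⟨i, j, hij, hle⟩
  · exact hCc.to_subtype
  · ext w
    constructor
    · rintro ⟨x, hx, hxf⟩
      refine ⟨x.1, ?_, hxf⟩
      have := U.restrict_reach_sub C hCsim w (U.restrict C hCsim).init x hx
      refine U.reachSet_mono w ?_ this
      rintro y ⟨z, hz, rfl⟩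
      exact hz
    · intro hw
      obtain ⟨x, hx, hxf⟩ := hT ⟨w, hw⟩ C ((Set.subset_iUnion Tfun ⟨w, hw⟩).trans hS0C)
      have hsC : ({sfun ⟨w, hw⟩} : Set U.S) ⊆ C :=
        Set.singleton_subset_iff.mpr (hS0C (Set.mem_iUnion.mpr ⟨⟨w, hw⟩, hsT ⟨w, hw⟩⟩))
      obtain ⟨h, hmem⟩ := U.restrict_reach_sup C hCsim w {sfun ⟨w, hw⟩} hsC x hx
      refine ⟨⟨x, h⟩, ?_, hxf⟩
      refine (U.restrict C hCsim).reachSet_mono w ?_ hmem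
      intro y hy
      have h2 : y.1 = sfun ⟨w, hw⟩ := hy
      show y.1 ∈ U.init
      rw [h2]
      exact hinit ⟨w, hw⟩
end

section
/- Let (S, ≤) be a quasi order. Then (S, ≤) is a WQO if and only if every sequence (D_i)_{i∈ℕ} of downward-closed subsets of S has a subsequence (D_{φ(i)})_{i∈ℕ} (φ : ℕ → ℕ strictly monotone) that converges, i.e., ⋃_{i∈ℕ} ⋂_{j≥i} D_{φ(j)} = ⋃_{i∈ℕ} D_{φ(i)}. -/
/-- A relation is a well quasi order if every infinite sequence has an
increasing pair `i < j` with `r (f i) (f j)`. -/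
def IsWQORel {S : Type*} (r : S → S → Prop) : Prop :=
  ∀ f : ℕ → S, ∃ i j, i < j ∧ r (f i) (f j)

/-- In a WQO, every nonempty family of downward-closed sets has a `⊆`-minimal
element. -/
private lemma exists_min_downClosed {S : Type*} [Preorder S]
    (hw : IsWQORel ((· ≤ ·) : S → S → Prop))
    (T : Set (Set S)) (hT : ∀ A ∈ T, ∀ ⦃s t : S⦄, s ≤ t → t ∈ A → s ∈ A)
    (hne : T.Nonempty) : ∃ M ∈ T, ∀ A ∈ T, ¬ A ⊂ M := by
  by_contra h
  push_neg at h
  obtain ⟨A₀, hA₀⟩ := hne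
  choose F hF1 hF2 using h
  let g : ℕ → {A : Set S // A ∈ T} := fun n =>
    Nat.rec ⟨A₀, hA₀⟩ (fun _ p => ⟨F p.1 p.2, hF1 p.1 p.2⟩) n
  have hstep : ∀ n, (g (n + 1)).1 ⊂ (g n).1 := fun n => hF2 (g n).1 (g n).2
  have hchain : ∀ i j, i ≤ j → (g j).1 ⊆ (g i).1 := by
    intro i j hij
    induction j with
    | zero => simp_all
    | succ k ih =>
      rcases Nat.lt_or_ge i (k + 1) with hlt | hge
      · exact ((hstep k).1).trans (ih (Nat.lt_succ_iff.mp hlt))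
      · have : i = k + 1 := le_antisymm hij hge
        subst this; exact subset_rfl
  have hx : ∀ n, ∃ x ∈ (g n).1, x ∉ (g (n + 1)).1 := fun n =>
    Set.exists_of_ssubset (hstep n)
  choose x hx1 hx2 using hx
  obtain ⟨i, j, hij, hle⟩ := hw x
  have : x j ∈ (g (i + 1)).1 := hchain (i + 1) j hij (hx1 j)
  exact hx2 i (hT _ (g (i + 1)).2 hle this)

/-- A quasi order `(S, ≤)` is a WQO iff every sequence of
downward-closed subsets of `S` has a subsequence that converges in the lattice of
downward-closed sets, i.e. `⋃ᵢ ⋂_{j ≥ i} D (φ j) = ⋃ᵢ D (φ i)`. -/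
theorem wqo_iff_downClosed_converging_subseq {S : Type*} [Preorder S] :
    IsWQORel ((· ≤ ·) : S → S → Prop) ↔
      ∀ D : ℕ → Set S, (∀ i, ∀ ⦃s t : S⦄, s ≤ t → t ∈ D i → s ∈ D i) →
        ∃ φ : ℕ → ℕ, StrictMono φ ∧
          (⋃ i, ⋂ j, ⋂ (_ : i ≤ j), D (φ j)) = ⋃ i, D (φ i) := by
  constructor
  · intro hw D hD
    -- family of unions over subsequences
    set T : Set (Set S) := {U | ∃ φ : ℕ → ℕ, StrictMono φ ∧ U = ⋃ i, D (φ i)} with hT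
    have hTdown : ∀ A ∈ T, ∀ ⦃s t : S⦄, s ≤ t → t ∈ A → s ∈ A := by
      rintro A ⟨φ, -, rfl⟩ s t hst ht
      obtain ⟨_, ⟨i, rfl⟩, hti⟩ := ht
      exact Set.mem_iUnion.mpr ⟨i, hD (φ i) hst hti⟩
    have hne : T.Nonempty := ⟨⋃ i, D i, id, strictMono_id, by simp⟩
    obtain ⟨M, ⟨φ, hφ, rfl⟩, hmin⟩ := exists_min_downClosed hw T hTdown hne
    refine ⟨φ, hφ, ?_⟩
    apply Set.Subset.antisymm
    · refine Set.iUnion_subset fun i => ?_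
      exact (Set.biInter_subset_of_mem (le_refl i)).trans
        (Set.subset_iUnion (fun k => D (φ k)) i)
    · refine Set.iUnion_subset fun k x hxk => ?_
      by_contra hx
      simp only [Set.mem_iUnion, Set.mem_iInter, not_exists, not_forall] at hx
      -- hx : ∀ i, ∃ j, i ≤ j ∧ x ∉ D (φ j)
      have hfreq : ∃ᶠ n in Filter.atTop, x ∉ D (φ n) := by
        rw [Filter.frequently_atTop]
        intro a
        obtain ⟨j, hj, hxj⟩ := hx a
        exact ⟨j, hj, hxj⟩
      obtain ⟨ψ, hψ, hψx⟩ := Filter.extraction_of_frequently_atTop hfreq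
      have hsub : (⋃ i, D (φ (ψ i))) ⊂ ⋃ i, D (φ i) := by
        constructor
        · exact Set.iUnion_subset fun i => Set.subset_iUnion (fun k => D (φ k)) (ψ i)
        · intro hcon
          have : x ∈ ⋃ i, D (φ (ψ i)) :=
            hcon (Set.mem_iUnion.mpr ⟨k, hxk⟩)
          obtain ⟨_, ⟨i, rfl⟩, hxi⟩ := this
          exact hψx i hxi
      exact hmin _ ⟨φ ∘ ψ, hφ.comp hψ, rfl⟩ hsub
  · intro h f
    set D : ℕ → Set S := fun i => {s | ∃ j, i ≤ j ∧ s ≤ f j} with hDdef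
    have hD : ∀ i, ∀ ⦃s t : S⦄, s ≤ t → t ∈ D i → s ∈ D i := by
      rintro i s t hst ⟨j, hj, htj⟩
      exact ⟨j, hj, hst.trans htj⟩
    obtain ⟨φ, hφ, hconv⟩ := h D hD
    have hmem : f (φ 0) ∈ ⋃ i, D (φ i) :=
      Set.mem_iUnion.mpr ⟨0, ⟨φ 0, le_refl _, le_refl _⟩⟩
    rw [← hconv] at hmem
    obtain ⟨_, ⟨i, rfl⟩, hmemi⟩ := hmem
    have hji : f (φ 0) ∈ D (φ (max i 1)) := by
      have := Set.mem_iInter.mp hmemi (max i 1)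
      exact Set.mem_iInter.mp this (le_max_left i 1)
    obtain ⟨m, hm, hfm⟩ := hji
    refine ⟨φ 0, m, ?_, hfm⟩
    calc φ 0 < φ 1 := hφ Nat.zero_lt_one
      _ ≤ φ (max i 1) := hφ.monotone (le_max_right i 1)
      _ ≤ m := hm
end

section
/- Let U be a CTS over a finite alphabet Σ with a countable set of states, and let X be an inductive invariant of U. Then the closure cl(X) is again an inductive invariant of U, and cl(X) is finitely represented, i.e., cl(X) = ↓Q for some finite set Q of states. -/
/-- A sequence in a complete lattice converges if
`⨆ i, ⨅ j ≥ i, s j = ⨆ i, s i`. -/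
def Converges {S : Type*} [CompleteLattice S] (s : ℕ → S) : Prop :=
  (⨆ i, ⨅ j, ⨅ (_ : i ≤ j), s j) = ⨆ i, s i

/-- A completely distributive lattice is converging if every sequence has a
converging subsequence. -/
def ConvergingLattice (S : Type*) [CompletelyDistribLattice S] : Prop :=
  ∀ s : ℕ → S, ∃ φ : ℕ → ℕ, StrictMono φ ∧ Converges (s ∘ φ)

/-- The closure of a set: all joins of converging sequences inside the set. -/
def limClosure {S : Type*} [CompleteLattice S] (X : Set S) : Set S :=
  {x | ∃ s : ℕ → S, (∀ i, s i ∈ X) ∧ Converges s ∧ x = ⨆ i, s i}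

/-- A set is closed if it contains the joins of all its converging sequences. -/
def SeqClosed {S : Type*} [CompleteLattice S] (G : Set S) : Prop :=
  ∀ s : ℕ → S, (∀ i, s i ∈ G) → Converges s → (⨆ i, s i) ∈ G

namespace CTSAux

section CompleteLattice
variable {S : Type*} [CompleteLattice S]

/-- tail infimum of a sequence -/
def tl (s : ℕ → S) (i : ℕ) : S := ⨅ j, ⨅ (_ : i ≤ j), s j

lemma tl_le (s : ℕ → S) {i j : ℕ} (h : i ≤ j) : tl s i ≤ s j := iInf₂_le j h

lemma le_tl {s : ℕ → S} {i : ℕ} {a : S} (h : ∀ j, i ≤ j → a ≤ s j) : a ≤ tl s i :=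
  le_iInf₂ h

lemma tl_mono (s : ℕ → S) : Monotone (tl s) :=
  fun _ _ hi => le_tl fun _ hj => tl_le s (hi.trans hj)

lemma converges_def {s : ℕ → S} (h : Converges s) : (⨆ i, tl s i) = ⨆ i, s i := h

lemma converges_const (c : S) : Converges (fun _ => c) := by
  have h1 : ∀ i : ℕ, tl (fun _ => c) i = c := fun i =>
    le_antisymm (tl_le _ (le_refl i)) (le_tl fun _ _ => le_rfl)
  show (⨆ i, tl (fun _ => c) i) = _
  simp [h1]

lemma mem_limClosure_self {X : Set S} {x : S} (hx : x ∈ X) : x ∈ limClosure X :=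
  ⟨fun _ => x, fun _ => hx, converges_const x, by simp⟩

/-- A sSup-preserving map is monotone. -/
lemma mono_of_sSup {f : S → S} (hf : ∀ P : Set S, f (sSup P) = sSup (f '' P))
    {a b : S} (hab : a ≤ b) : f a ≤ f b := by
  have h1 : sSup ({a, b} : Set S) = b := by rw [sSup_pair, sup_eq_right.2 hab]
  have h2 := hf ({a, b} : Set S)
  rw [h1, Set.image_pair, sSup_pair] at h2
  rw [h2]; exact le_sup_left

lemma map_iSup {f : S → S} (hf : ∀ P : Set S, f (sSup P) = sSup (f '' P))
    (s : ℕ → S) : f (⨆ i, s i) = ⨆ i, f (s i) := by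
  rw [← sSup_range, hf, ← Set.range_comp, sSup_range]; rfl

/-- sSup-preserving maps preserve convergence. -/
lemma converges_map {f : S → S} (hf : ∀ P : Set S, f (sSup P) = sSup (f '' P))
    {s : ℕ → S} (hs : Converges s) : Converges (fun i => f (s i)) := by
  show (⨆ i, tl (fun j => f (s j)) i) = ⨆ i, f (s i)
  refine le_antisymm (iSup_le fun i => (tl_le _ (le_refl i)).trans (le_iSup (fun i => f (s i)) i)) ?_
  calc (⨆ i, f (s i)) = f (⨆ i, s i) := (map_iSup hf s).symm
    _ = f (⨆ i, tl s i) := by rw [converges_def hs]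
    _ = ⨆ i, f (tl s i) := map_iSup hf _
    _ ≤ ⨆ i, tl (fun j => f (s j)) i :=
        iSup_mono fun i => le_tl fun j hj => mono_of_sSup hf (tl_le s hj)

/-- Bound a finite subset of the range of a monotone sequence. -/
lemma finite_bound {t : ℕ → S} (ht : Monotone t) {N : Set S} (hN : N.Finite)
    (hsub : N ⊆ Set.range t) : ∃ m, ∀ n ∈ N, n ≤ t m := by
  classical
  have hg : ∀ n : S, ∃ i : ℕ, n ∈ N → t i = n := by
    intro n
    by_cases hn : n ∈ N
    · obtain ⟨i, hi⟩ := hsub hn; exact ⟨i, fun _ => hi⟩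
    · exact ⟨0, fun h => absurd h hn⟩
  choose g hgt using hg
  refine ⟨hN.toFinset.sup g, fun n hn => ?_⟩
  have : g n ≤ hN.toFinset.sup g := Finset.le_sup (hN.mem_toFinset.2 hn)
  calc n = t (g n) := (hgt n hn).symm
    _ ≤ t (hN.toFinset.sup g) := ht this

end CompleteLattice

section CDL
variable {S : Type*} [CompletelyDistribLattice S]

lemma tl_inf (a : S) (t : ℕ → S) (i : ℕ) : tl (fun j => a ⊓ t j) i = a ⊓ tl t i := by
  refine le_antisymm (le_inf ((tl_le _ (le_refl i)).trans inf_le_left)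
    (le_tl fun j hj => (tl_le _ hj).trans inf_le_right)) ?_
  exact le_tl fun j hj => inf_le_inf_left a (tl_le t hj)

lemma limClosure_dc {X : Set S} (hXdc : ∀ ⦃s t : S⦄, s ≤ t → t ∈ X → s ∈ X)
    ⦃s t : S⦄ (hst : s ≤ t) (ht : t ∈ limClosure X) : s ∈ limClosure X := by
  obtain ⟨u, huX, huc, rfl⟩ := ht
  refine ⟨fun i => s ⊓ u i, fun i => hXdc inf_le_right (huX i), ?_, ?_⟩
  · show (⨆ i, tl (fun j => s ⊓ u j) i) = ⨆ i, s ⊓ u i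
    calc (⨆ i, tl (fun j => s ⊓ u j) i) = ⨆ i, s ⊓ tl u i := by simp [tl_inf]
      _ = s ⊓ ⨆ i, tl u i := (inf_iSup_eq _ _).symm
      _ = s ⊓ ⨆ i, u i := by rw [converges_def huc]
      _ = ⨆ i, s ⊓ u i := inf_iSup_eq _ _
  · rw [← inf_iSup_eq, inf_eq_left.2 hst]

/-- Key lemma: in a countable converging lattice, for any nonempty set `X` there is
a finite subset of `limClosure X` dominating `X`. -/
lemma exists_dominating [Countable S] (hconv : ConvergingLattice S) {X : Set S}
    (hne : X.Nonempty) :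
    ∃ Q : Set S, Q.Finite ∧ Q ⊆ limClosure X ∧ ∀ x ∈ X, ∃ q ∈ Q, x ≤ q := by
  classical
  by_contra h
  push_neg at h
  have : Nonempty S := ⟨hne.choose⟩
  obtain ⟨w, hw⟩ := exists_surjective_nat S
  have hQ : ∀ n : ℕ, ∃ x ∈ X, ∀ q ∈ (w '' {k | k ≤ n}) ∩ limClosure X, ¬ x ≤ q :=
    fun n => h _ (((Set.finite_Iic n).image w).inter_of_left _) Set.inter_subset_right
  choose x hxX hxq using hQ
  obtain ⟨φ, hφ, hc⟩ := hconv x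
  have hy : (⨆ k, x (φ k)) ∈ limClosure X := ⟨x ∘ φ, fun k => hxX (φ k), hc, rfl⟩
  obtain ⟨K, hK⟩ := hw (⨆ k, x (φ k))
  have hmem : w K ∈ (w '' {k | k ≤ φ K}) ∩ limClosure X :=
    ⟨⟨K, hφ.le_apply, rfl⟩, hK.symm ▸ hy⟩
  have hle : x (φ K) ≤ w K := hK ▸ le_iSup (fun k => x (φ k)) K
  exact hxq (φ K) (w K) hmem hle

end CDL
end CTSAux

/-- Let `U` be a CTS (a deterministic ULTS over a converging
lattice whose transition functions preserve arbitrary joins and whose upward-closed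
set of final states satisfies finite acceptance) with a countable set of states,
and let `X` be an inductive invariant of `U`. Then the closure `cl(X)` is again an
inductive invariant of `U`, and it is finitely represented: `cl(X) = ↓Q` for some
finite set `Q` of states. -/
theorem cts_closure_invariant_finitely_represented
    {A : Type} [Finite A] {S : Type*} [CompletelyDistribLattice S] [Countable S]
    (hconv : ConvergingLattice S)
    (init : S) (tr : S → A → S) (final : Set S)
    (hfinal_up : ∀ ⦃s t : S⦄, s ∈ final → s ≤ t → t ∈ final)
    (hjoin : ∀ (a : A) (P : Set S), tr (sSup P) a = sSup ((fun p => tr p a) '' P))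
    (hfinAcc : ∀ K : Set S, sSup K ∈ final → ∃ N, N ⊆ K ∧ N.Finite ∧ sSup N ∈ final)
    (X : Set S)
    (hXdc : ∀ ⦃s t : S⦄, s ≤ t → t ∈ X → s ∈ X)
    (hXinit : init ∈ X)
    (hXfinal : final ∩ X = ∅)
    (hXstep : ∀ (a : A), ∀ x ∈ X, tr x a ∈ X) :
    ((∀ ⦃s t : S⦄, s ≤ t → t ∈ limClosure X → s ∈ limClosure X) ∧
      init ∈ limClosure X ∧
      final ∩ limClosure X = ∅ ∧
      ∀ (a : A), ∀ x ∈ limClosure X, tr x a ∈ limClosure X) ∧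
    ∃ Q : Set S, Q.Finite ∧ limClosure X = {s | ∃ q ∈ Q, s ≤ q} := by
  classical
  obtain ⟨Q, hQfin, hQsub, hQdom⟩ := CTSAux.exists_dominating hconv ⟨init, hXinit⟩
  have hdc : ∀ ⦃s t : S⦄, s ≤ t → t ∈ limClosure X → s ∈ limClosure X :=
    CTSAux.limClosure_dc hXdc
  have hclQ : limClosure X = {s | ∃ q ∈ Q, s ≤ q} := by
    ext y
    constructor
    · rintro ⟨s, hsX, hsc, rfl⟩
      have : Finite ↥Q := hQfin.to_subtype
      have hf : ∀ i : ℕ, ∃ q : ↥Q, s i ≤ (q : S) := fun i => by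
        obtain ⟨q, hq, hle⟩ := hQdom (s i) (hsX i); exact ⟨⟨q, hq⟩, hle⟩
      choose f hfle using hf
      obtain ⟨q, hq⟩ := Finite.exists_infinite_fiber f
      have hinf : (f ⁻¹' {q}).Infinite := Set.infinite_coe_iff.1 hq
      refine ⟨(q : S), q.2, ?_⟩
      rw [← CTSAux.converges_def hsc]
      refine iSup_le fun i => ?_
      obtain ⟨j, hj, hij⟩ := hinf.exists_gt i
      have hq' : f j = q := hj
      have hle : s j ≤ (q : S) := hq' ▸ hfle j
      exact (CTSAux.tl_le s hij.le).trans hle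
    · rintro ⟨q, hq, hle⟩
      exact hdc hle (hQsub hq)
  refine ⟨⟨hdc, CTSAux.mem_limClosure_self hXinit, ?_, ?_⟩, Q, hQfin, hclQ⟩
  · rw [Set.eq_empty_iff_forall_notMem]
    rintro y ⟨hyF, s, hsX, hsc, rfl⟩
    have h1 : sSup (Set.range (CTSAux.tl s)) ∈ final := by
      rwa [sSup_range, CTSAux.converges_def hsc]
    obtain ⟨N, hNsub, hNfin, hNF⟩ := hfinAcc _ h1
    obtain ⟨m, hm⟩ := CTSAux.finite_bound (CTSAux.tl_mono s) hNfin hNsub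
    have h2 : CTSAux.tl s m ∈ final := hfinal_up hNF (sSup_le hm)
    have h3 : CTSAux.tl s m ∈ X := hXdc (CTSAux.tl_le s (le_refl m)) (hsX m)
    exact Set.eq_empty_iff_forall_notMem.1 hXfinal _ ⟨h2, h3⟩
  · intro a x hx
    obtain ⟨s, hsX, hsc, rfl⟩ := hx
    have hf : ∀ P : Set S, tr (sSup P) a = sSup ((fun p => tr p a) '' P) := hjoin a
    exact ⟨fun i => tr (s i) a, fun i => hXstep a _ (hsX i),
      CTSAux.converges_map (f := fun p => tr p a) hf hsc, CTSAux.map_iSup (f := fun p => tr p a) hf s⟩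
end

section
/- Let (S, ≤) be a converging lattice and let X ⊆ S be downward closed. Then X ⊆ cl(X), cl(cl(X)) = cl(X), and cl(X) is downward closed, i.e., ↓cl(X) = cl(X). -/
namespace LimProof

/-! ### Basic lemmas -/

section Basics
variable {S : Type*} [CompleteLattice S]

/-- tail infimum of a sequence -/
def tailInf (s : ℕ → S) (i : ℕ) : S := ⨅ j, ⨅ (_ : i ≤ j), s j

lemma tailInf_le (s : ℕ → S) {i j : ℕ} (h : i ≤ j) : tailInf s i ≤ s j :=
  (iInf_le _ j).trans (iInf_le _ h)

lemma tailInf_mono (s : ℕ → S) : Monotone (tailInf s) := by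
  intro i j hij
  exact le_iInf₂ fun k hk => tailInf_le s (hij.trans hk)

lemma monotone_converges {s : ℕ → S} (hs : Monotone s) : Converges s := by
  have h : ∀ i, tailInf s i = s i := fun i =>
    le_antisymm (tailInf_le s le_rfl) (le_iInf₂ fun j hj => hs hj)
  show (⨆ i, tailInf s i) = ⨆ i, s i
  simp only [h]

lemma mem_limClosure_of_monotone {X : Set S} {s : ℕ → S} (hmem : ∀ i, s i ∈ X)
    (hs : Monotone s) : (⨆ i, s i) ∈ limClosure X :=
  ⟨s, hmem, monotone_converges hs, rfl⟩

lemma subset_limClosure (X : Set S) : X ⊆ limClosure X := by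
  intro x hx
  exact ⟨fun _ => x, fun _ => hx, monotone_converges monotone_const, (iSup_const).symm⟩

end Basics

section Down
variable {S : Type*} [CompletelyDistribLattice S]

lemma tailInf_inf (s : ℕ → S) (y : S) (i : ℕ) :
    tailInf (fun j => s j ⊓ y) i = tailInf s i ⊓ y := by
  apply le_antisymm
  · refine le_inf (le_iInf₂ fun j hj => (tailInf_le _ hj).trans inf_le_left) ?_
    exact (tailInf_le (fun j => s j ⊓ y) (le_refl i)).trans inf_le_right
  · exact le_iInf₂ fun j hj => le_inf (inf_le_left.trans (tailInf_le s hj)) inf_le_right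

/-- downward closedness of the closure -/
lemma limClosure_down {X : Set S} (hX : ∀ ⦃s t : S⦄, s ≤ t → t ∈ X → s ∈ X)
    {x y : S} (hx : x ∈ limClosure X) (hy : y ≤ x) : y ∈ limClosure X := by
  obtain ⟨s, hmem, hconv, rfl⟩ := hx
  refine ⟨fun i => s i ⊓ y, fun i => hX inf_le_left (hmem i), ?_, ?_⟩
  · show (⨆ i, tailInf (fun j => s j ⊓ y) i) = _
    have h1 : (⨆ i, tailInf (fun j => s j ⊓ y) i) = (⨆ i, tailInf s i) ⊓ y := by
      simp only [tailInf_inf]; exact (iSup_inf_eq _ _).symm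
    rw [h1, show (⨆ i, tailInf s i) = ⨆ i, s i from hconv, iSup_inf_eq]
  · rw [← iSup_inf_eq, inf_eq_right.2 hy]

end Down

/-! ### The totally-below relation -/

section TB
variable {S : Type*} [CompletelyDistribLattice S]

/-- `y` is totally below `x`. -/
def TB (y x : S) : Prop := ∀ A : Set S, x ≤ sSup A → ∃ a ∈ A, y ≤ a

lemma TB.mono_left {y' y x : S} (h : TB y x) (hy : y' ≤ y) : TB y' x := by
  intro A hA
  obtain ⟨a, ha, hya⟩ := h A hA
  exact ⟨a, ha, hy.trans hya⟩

lemma TB.mono_right {y x x' : S} (h : TB y x) (hx : x ≤ x') : TB y x' := by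
  intro A hA
  exact h A (hx.trans hA)

lemma TB.le {y x : S} (h : TB y x) : y ≤ x := by
  obtain ⟨a, ha, hya⟩ := h {x} (by simp)
  rcases ha with rfl
  exact hya

/-- Raney: in a completely distributive lattice every element is the sup of the
elements totally below it. -/
lemma le_sSup_TB (x : S) : x ≤ sSup {y | TB y x} := by
  classical
  have h1 : x ≤ ⨅ A : {A : Set S // x ≤ sSup A}, ⨆ b : A.1, (b : S) := by
    refine le_iInf fun A => ?_
    rw [← sSup_eq_iSup']
    exact A.2
  rw [iInf_iSup_eq] at h1
  refine h1.trans (iSup_le fun g => ?_)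
  refine le_sSup ?_
  intro B hB
  exact ⟨g ⟨B, hB⟩, (g ⟨B, hB⟩).2, iInf_le (fun A : {A : Set S // x ≤ sSup A} => (g A : S)) ⟨B, hB⟩⟩

lemma TB.interpolate {y x : S} (h : TB y x) : ∃ z, TB y z ∧ TB z x := by
  have hA : x ≤ sSup {w | ∃ z, TB z x ∧ TB w z} := by
    refine (le_sSup_TB x).trans (sSup_le fun z hz => ?_)
    refine (le_sSup_TB z).trans (sSup_le_sSup ?_)
    intro w hw
    exact ⟨z, hz, hw⟩
  obtain ⟨w, ⟨z, hzx, hwz⟩, hyw⟩ := h _ hA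
  exact ⟨z, hwz.mono_left hyw, hzx⟩

/-- `TB` applied to the range of a sequence. -/
lemma TB.le_of_le_iSup {y x : S} (h : TB y x) {τ : ℕ → S} (hx : x ≤ ⨆ k, τ k) :
    ∃ k, y ≤ τ k := by
  obtain ⟨a, ⟨k, rfl⟩, hya⟩ := h (Set.range τ) (by rwa [sSup_range])
  exact ⟨k, hya⟩

/-- Good pair lemma: in a converging lattice, for any sequence of totally-below pairs,
some earlier lower element is below some later upper element. -/
lemma goodPair (hconv : ConvergingLattice S) (y z : ℕ → S) (h : ∀ k, TB (y k) (z k)) :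
    ∃ k l, k < l ∧ y k ≤ z l := by
  obtain ⟨φ, hφ, hc⟩ := hconv z
  have h0 : z (φ 0) ≤ ⨆ K, tailInf (z ∘ φ) K := by
    have he : (⨆ K, tailInf (z ∘ φ) K) = ⨆ i, z (φ i) := hc
    rw [he]
    exact le_iSup (fun i => z (φ i)) 0
  obtain ⟨K, hK⟩ := (h (φ 0)).le_of_le_iSup h0
  refine ⟨φ 0, φ (K + 1), hφ (Nat.succ_pos K), ?_⟩
  exact hK.trans (tailInf_le (z ∘ φ) (Nat.le_succ K))

end TB

/-! ### The combinatorial core -/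

noncomputable section CCout
open Cardinal Set

def Om : Ordinal.{0} := (Cardinal.aleph 1).ord

lemma enat_le_of_forall {c d : ℕ∞} (h : ∀ n : ℕ, (n : ℕ∞) ≤ c → (n : ℕ∞) ≤ d) : c ≤ d := by
  induction c using ENat.recTopCoe with
  | top =>
    by_contra hd
    have hd' : d ≠ ⊤ := fun hdd => hd (hdd ▸ le_rfl)
    have h2 := h (d.toNat + 1) le_top
    conv_rhs at h2 => rw [← ENat.coe_toNat hd']
    rw [Nat.cast_le] at h2
    omega
  | coe k => exact h k le_rfl

lemma ctbl_Iio {o : Ordinal.{0}} (ho : o < Om) : (Set.Iio o).Countable := by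
  rw [← Cardinal.le_aleph0_iff_set_countable, Ordinal.mk_Iio_ordinal]
  rw [Om, Cardinal.lt_ord] at ho
  have h1 : o.card ≤ ℵ₀ := by
    rw [← Cardinal.succ_aleph0, Order.lt_succ_iff] at ho
    exact ho
  exact Cardinal.lift_le_aleph0.2 h1

lemma not_ctbl_IioOmega : ¬ (Set.Iio Om).Countable := by
  intro hc
  rw [← Cardinal.le_aleph0_iff_set_countable, Ordinal.mk_Iio_ordinal, Om,
    Cardinal.card_ord] at hc
  rw [Cardinal.lift_le_aleph0] at hc
  exact absurd hc (not_le.2 Cardinal.aleph0_lt_aleph_one)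

lemma omega_isLimit : Order.IsSuccLimit Om := Cardinal.isSuccLimit_ord (Cardinal.aleph0_le_aleph 1)

lemma succ_lt_Omega {o : Ordinal.{0}} (ho : o < Om) : o + 1 < Om := by
  rw [Ordinal.add_one_eq_succ]
  exact omega_isLimit.succ_lt ho

/-- The key combinatorial lemma: a family of pairs of `ℕ∞`-valued functions with the
"good pair" property has a countable dominating subfamily. -/
lemma countable_dominating {P : Type*} (g h : P → ℕ → ℕ∞)
    (hGP : ∀ a : ℕ → P, ∃ k l, k < l ∧ g (a k) ≤ h (a l)) :
    ∃ Q : Set P, Q.Countable ∧ ∀ p, ∃ q ∈ Q, g p ≤ h q := by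
  by_contra hcon
  push_neg at hcon
  have hcon' : ∀ Q : Set P, Q.Countable → ∃ p, ∀ q ∈ Q, ¬ g p ≤ h q := by
    intro Q hQ
    obtain ⟨p, hp⟩ := hcon Q hQ
    exact ⟨p, fun q hq => hp q hq⟩
  have hP : Nonempty P := ⟨(hcon' ∅ Set.countable_empty).choose⟩
  classical
  -- escape function
  let esc : Set P → P := fun T => if hT : T.Countable then (hcon' T hT).choose else hP.some
  have esc_spec : ∀ T : Set P, T.Countable → ∀ q ∈ T, ¬ g (esc T) ≤ h q := by
    intro T hT
    simp only [esc, dif_pos hT]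
    exact (hcon' T hT).choose_spec
  -- the transfinite escape sequence
  let F : Ordinal.{0} → P := Ordinal.lt_wf.fix
    (fun o IH => esc {p | ∃ o', ∃ h' : o' < o, p = IH o' h'})
  have F_eq : ∀ o, F o = esc {p | ∃ o', ∃ _ : o' < o, p = F o'} :=
    fun o => WellFounded.fix_eq _ _ o
  have hFban : ∀ {β α : Ordinal.{0}}, β < α → α < Om → ¬ g (F α) ≤ h (F β) := by
    intro β α hβα hα
    have himg : {p | ∃ o', ∃ _ : o' < α, p = F o'} = F '' (Set.Iio α) := by
      ext p
      simp only [Set.mem_setOf_eq, Set.mem_image, Set.mem_Iio]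
      constructor
      · rintro ⟨o', ho', rfl⟩; exact ⟨o', ho', rfl⟩
      · rintro ⟨o', ho', rfl⟩; exact ⟨o', ho', rfl⟩
    have hctbl : {p | ∃ o', ∃ _ : o' < α, p = F o'}.Countable := by
      rw [himg]; exact (ctbl_Iio hα).image F
    rw [F_eq α]
    exact esc_spec _ hctbl (F β) ⟨β, hβα, rfl⟩
  -- the relation
  set R : Ordinal.{0} → Ordinal.{0} → Prop := fun β α => g (F β) ≤ h (F α) with hR
  have hNoIndep : ∀ a : ℕ → Ordinal.{0}, ¬(∀ k l, k < l → ¬ R (a k) (a l)) := by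
    intro a hbad
    obtain ⟨k, l, hkl, hle⟩ := hGP (fun k => F (a k))
    exact hbad k l hkl hle
  -- bad sets
  set Bad : Set Ordinal.{0} → Ordinal.{0} → Set Ordinal.{0} :=
    fun A α => {β | β ∈ A ∧ α < β ∧ ¬ R α β} with hBad
  -- Step E : a set all of whose bad sets are countable
  have hEx : ∃ A : Set Ordinal.{0}, A ⊆ Set.Iio Om ∧ ¬ A.Countable ∧
      ∀ α ∈ A, (Bad A α).Countable := by
    by_contra hbadA
    push_neg at hbadA
    have hbadA' : ∀ A : Set Ordinal.{0}, A ⊆ Set.Iio Om → ¬ A.Countable →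
        ∃ α ∈ A, ¬ (Bad A α).Countable := fun A h1 h2 => hbadA A h1 h2
    let T := {A : Set Ordinal.{0} // A ⊆ Set.Iio Om ∧ ¬ A.Countable}
    let step : T → Ordinal.{0} × T := fun A =>
      let spec := hbadA' A.1 A.2.1 A.2.2
      ⟨spec.choose, ⟨Bad A.1 spec.choose,
        fun β hβ => A.2.1 hβ.1, spec.choose_spec.2⟩⟩
    have step_mem : ∀ A : T, (step A).1 ∈ A.1 :=
      fun A => (hbadA' A.1 A.2.1 A.2.2).choose_spec.1
    let seq : ℕ → T := fun n => Nat.rec ⟨Set.Iio Om, subset_rfl, not_ctbl_IioOmega⟩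
      (fun _ A => (step A).2) n
    have seq_succ : ∀ n, ((seq (n+1)).1 : Set Ordinal.{0}) = Bad (seq n).1 (step (seq n)).1 :=
      fun n => rfl
    let a : ℕ → Ordinal.{0} := fun n => (step (seq n)).1
    have hsub : ∀ k l, k < l → ((seq l).1 : Set Ordinal.{0}) ⊆ Bad (seq k).1 (a k) := by
      intro k l hkl
      induction l with
      | zero => omega
      | succ l IH =>
        rcases Nat.lt_succ_iff_lt_or_eq.1 hkl with hc | hc
        · refine subset_trans ?_ (IH hc)
          rw [seq_succ l]
          exact fun β hβ => hβ.1
        · subst hc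
          rw [seq_succ k]
    refine hNoIndep a ?_
    intro k l hkl hRkl
    have hmem : a l ∈ Bad (seq k).1 (a k) := hsub k l hkl (step_mem (seq l))
    exact hmem.2.2 hRkl
  obtain ⟨A, hAΩ, hAunc, hABad⟩ := hEx
  -- Step F : build the clique
  let pick : Set Ordinal.{0} → Ordinal.{0} := fun T => if hT : T.Nonempty then hT.choose else 0
  have pick_mem : ∀ T : Set Ordinal.{0}, T.Nonempty → pick T ∈ T := by
    intro T hT
    simp only [pick, dif_pos hT]
    exact hT.choose_spec
  let G : Ordinal.{0} → Ordinal.{0} := Ordinal.lt_wf.fix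
    (fun ξ IH => pick (A \ ((⋃ η, ⋃ hη : η < ξ, Bad A (IH η hη)) ∪
      (⋃ η, ⋃ hη : η < ξ, Set.Iic (IH η hη)))))
  have G_eq : ∀ ξ, G ξ = pick (A \ ((⋃ η, ⋃ _ : η < ξ, Bad A (G η)) ∪
      (⋃ η, ⋃ _ : η < ξ, Set.Iic (G η)))) := fun ξ => WellFounded.fix_eq _ _ ξ
  have hGmain : ∀ ξ, ξ < Om → G ξ ∈ A ∧ ∀ η, η < ξ → G η < G ξ ∧ R (G η) (G ξ) := by
    intro ξ
    induction ξ using Ordinal.induction with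
    | _ ξ IH =>
      intro hξΩ
      have hIio : (Set.Iio ξ).Countable := ctbl_Iio hξΩ
      have hUc : ((⋃ η, ⋃ _ : η < ξ, Bad A (G η)) ∪
          (⋃ η, ⋃ _ : η < ξ, Set.Iic (G η))).Countable := by
        refine Set.Countable.union ?_ ?_
        · exact hIio.biUnion (fun η hη => hABad (G η) ((IH η hη (hη.trans hξΩ)).1))
        · refine hIio.biUnion (fun η hη => ?_)
          have hGη : G η < Om := hAΩ (IH η hη (hη.trans hξΩ)).1
          exact (ctbl_Iio (succ_lt_Omega hGη)).mono (Set.Iic_subset_Iio.2 (lt_add_one _))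
      have hne : (A \ ((⋃ η, ⋃ _ : η < ξ, Bad A (G η)) ∪
          (⋃ η, ⋃ _ : η < ξ, Set.Iic (G η)))).Nonempty := by
        rcases Set.eq_empty_or_nonempty (A \ ((⋃ η, ⋃ _ : η < ξ, Bad A (G η)) ∪
          (⋃ η, ⋃ _ : η < ξ, Set.Iic (G η)))) with he | hne
        · exfalso
          apply hAunc
          refine hUc.mono ?_
          intro β hβ
          by_contra hβU
          have hin : β ∈ A \ ((⋃ η, ⋃ _ : η < ξ, Bad A (G η)) ∪
              (⋃ η, ⋃ _ : η < ξ, Set.Iic (G η))) := ⟨hβ, hβU⟩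
          rw [he] at hin
          exact hin
        · exact hne
      have hmem := pick_mem _ hne
      rw [← G_eq ξ] at hmem
      obtain ⟨hGA, hGnot⟩ := hmem
      refine ⟨hGA, fun η hη => ?_⟩
      have h1 : G ξ ∉ Bad A (G η) := by
        intro hc
        exact hGnot (Set.mem_union_left _ (Set.mem_iUnion.2 ⟨η, Set.mem_iUnion.2 ⟨hη, hc⟩⟩))
      have h2 : G ξ ∉ Set.Iic (G η) := by
        intro hc
        exact hGnot (Set.mem_union_right _ (Set.mem_iUnion.2 ⟨η, Set.mem_iUnion.2 ⟨hη, hc⟩⟩))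
      have h3 : G η < G ξ := not_le.1 h2
      refine ⟨h3, ?_⟩
      by_contra hRc
      exact h1 ⟨hGA, h3, hRc⟩
  -- abbreviations
  have hclique : ∀ {η ξ : Ordinal.{0}}, η < ξ → ξ < Om → g (F (G η)) ≤ h (F (G ξ)) :=
    fun {η ξ} hηξ hξ => ((hGmain ξ hξ).2 η hηξ).2
  have hban2 : ∀ {η ξ : Ordinal.{0}}, η < ξ → ξ < Om → ¬ g (F (G ξ)) ≤ h (F (G η)) := by
    intro η ξ hηξ hξ
    have h1 : G η < G ξ := ((hGmain ξ hξ).2 η hηξ).1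
    have h2 : G ξ < Om := hAΩ (hGmain ξ hξ).1
    exact hFban h1 h2
  -- Step G : stabilization
  let pickN : ℕ → ℕ → Ordinal.{0} := fun i n =>
    if hin : ∃ η, η < Om ∧ (n : ℕ∞) ≤ g (F (G η)) i then hin.choose else 0
  have pickN_lt : ∀ (i n : ℕ), pickN i n < Om := by
    intro i n
    by_cases hin : ∃ η, η < Om ∧ (n : ℕ∞) ≤ g (F (G η)) i
    · simp only [pickN, dif_pos hin]
      exact hin.choose_spec.1
    · simp only [pickN, dif_neg hin]
      exact omega_isLimit.pos
  have pickN_spec : ∀ (i n : ℕ), (∃ η, η < Om ∧ (n : ℕ∞) ≤ g (F (G η)) i) →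
      (n : ℕ∞) ≤ g (F (G (pickN i n))) i := by
    intro i n hin
    simp only [pickN, dif_pos hin]
    exact hin.choose_spec.2
  set lam : Ordinal.{0} := (⨆ p : ℕ × ℕ, pickN p.1 p.2) + 1 with hlamdef
  have hsupl : (⨆ p : ℕ × ℕ, pickN p.1 p.2) < Om :=
    by rw [Om, Cardinal.ord_aleph]; exact Ordinal.iSup_lt_omega_one (fun p : ℕ × ℕ => (Cardinal.ord_aleph 1) ▸ pickN_lt p.1 p.2)
  have hlam : lam < Om := succ_lt_Omega hsupl
  have hkey : ∀ η, η < Om → ∀ i, g (F (G η)) i ≤ ⨆ η' : Set.Iio lam, g (F (G η'.1)) i := by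
    intro η hη i
    refine enat_le_of_forall fun (n : ℕ) hn => ?_
    have hex : ∃ η', η' < Om ∧ (n : ℕ∞) ≤ g (F (G η')) i := ⟨η, hη, hn⟩
    have hspec := pickN_spec i n hex
    have hmem : pickN i n ∈ Set.Iio lam := by
      have hle : pickN i n ≤ ⨆ p : ℕ × ℕ, pickN p.1 p.2 :=
        Ordinal.le_iSup (fun p : ℕ × ℕ => pickN p.1 p.2) (i, n)
      exact Set.mem_Iio.2 (lt_of_le_of_lt hle (lt_add_one _))
    exact hspec.trans (le_iSup (fun η' : Set.Iio lam => g (F (G η'.1)) i) ⟨pickN i n, hmem⟩)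
  have hfin : g (F (G (lam + 1))) ≤ h (F (G lam)) := by
    intro i
    refine (hkey (lam + 1) (succ_lt_Omega hlam) i).trans ?_
    refine iSup_le fun η' => ?_
    exact (hclique η'.2 hlam) i
  exact hban2 (lt_add_one lam) (succ_lt_Omega hlam) hfin

end CCout

/-! ### ℕ∞-valued column indices -/

section Rho
variable {S : Type*} [CompleteLattice S]

lemma iInf_coe_nat {K : Set ℕ} (hK : K.Nonempty) :
    (⨅ j : K, ((j : ℕ) : ℕ∞)) = ((sInf K : ℕ) : ℕ∞) := by
  apply le_antisymm
  · exact iInf_le_of_le ⟨sInf K, Nat.sInf_mem hK⟩ le_rfl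
  · exact le_iInf fun j => by exact_mod_cast Nat.sInf_le j.2

end Rho

/-! ### The main closedness lemma -/

section Crux
variable {S : Type*} [CompletelyDistribLattice S]

lemma limClosure_seqClosed (hconv : ConvergingLattice S) {X : Set S}
    (hX : ∀ ⦃s t : S⦄, s ≤ t → t ∈ X → s ∈ X) : SeqClosed (limClosure X) := by
  classical
  intro s hmem hc
  -- Step 1 : reduce to the monotone sequence of tail infima
  set t : ℕ → S := tailInf s with ht
  have ht_mem : ∀ i, t i ∈ limClosure X :=
    fun i => limClosure_down hX (hmem i) (tailInf_le s le_rfl)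
  have ht_mono : Monotone t := tailInf_mono s
  set x : S := ⨆ i, s i with hx
  have hxt : x = ⨆ i, t i := hc.symm
  -- Step 2 : rows
  choose σ hσmem hσconv hσsup using ht_mem
  set m : ℕ → ℕ → S := fun i j => tailInf (σ i) j with hm
  have hm_memX : ∀ i j, m i j ∈ X := fun i j => hX (tailInf_le (σ i) le_rfl) (hσmem i j)
  have hm_mono : ∀ i, Monotone (m i) := fun i => tailInf_mono (σ i)
  have hrow : ∀ i, (⨆ j, m i j) = t i := fun i => (hσconv i).trans (hσsup i).symm
  have hmle : ∀ i j, m i j ≤ t i := fun i j => (le_iSup (m i) j).trans (hrow i).le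
  -- Step 3 : the dense set of doubly totally-below elements
  set D : Set S := {y | ∃ z, TB y z ∧ ∃ i j, TB z (m i j)} with hD
  have hcover : x ≤ sSup D := by
    rw [hxt]
    refine iSup_le fun i => ?_
    rw [← hrow i]
    refine iSup_le fun j => ?_
    refine (le_sSup_TB (m i j)).trans (sSup_le fun w hw => ?_)
    obtain ⟨z, hwz, hzm⟩ := hw.interpolate
    exact le_sSup ⟨z, hwz, i, j, hzm⟩
  -- row indices for elements totally below some matrix entry
  have hzfin : ∀ (z : S) (i₀ j₀ : ℕ), TB z (m i₀ j₀) → ∀ l, i₀ ≤ l → ∃ j, z ≤ m l j := by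
    intro z i₀ j₀ hz l hl
    have h1 : m i₀ j₀ ≤ t l := (hmle i₀ j₀).trans (ht_mono hl)
    exact (hz.mono_right h1).le_of_le_iSup (hrow l).ge
  -- Step 4 : ℕ∞-valued column functions
  set ρ : S → ℕ → ℕ∞ := fun w i => ⨅ j : {j : ℕ // w ≤ m i j}, ((j : ℕ) : ℕ∞) with hρ
  have ρ_mono : ∀ {w w' : S}, w ≤ w' → ∀ i, ρ w i ≤ ρ w' i := by
    intro w w' hww' i
    exact le_iInf fun j => iInf_le_of_le ⟨j.1, hww'.trans j.2⟩ le_rfl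
  have ρ_fin : ∀ {w : S} {i j₀ : ℕ}, w ≤ m i j₀ → ρ w i ≤ (j₀ : ℕ∞) :=
    fun {w i j₀} hw => iInf_le_of_le ⟨j₀, hw⟩ le_rfl
  have ρ_spec : ∀ (w : S) (i j : ℕ), ρ w i ≤ (j : ℕ∞) → w ≤ m i j := by
    intro w i j hj
    have hne' : Nonempty {j' : ℕ // w ≤ m i j'} := by
      by_contra hne
      have hempty : IsEmpty {j' : ℕ // w ≤ m i j'} := not_nonempty_iff.1 hne
      have htop : ρ w i = ⊤ := by
        show (⨅ j' : {j' : ℕ // w ≤ m i j'}, ((j' : ℕ) : ℕ∞)) = ⊤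
        exact iInf_of_empty _
      rw [htop, top_le_iff] at hj
      exact ENat.coe_ne_top j hj
    have hne : {j' : ℕ | w ≤ m i j'}.Nonempty := Set.nonempty_coe_sort.1 hne'
    have hval : ρ w i = ((sInf {j' : ℕ | w ≤ m i j'} : ℕ) : ℕ∞) := iInf_coe_nat hne
    rw [hval, Nat.cast_le] at hj
    have hmem := Nat.sInf_mem hne
    exact hmem.trans (hm_mono i hj)
  -- Step 5 : the subtype of D with chosen data
  by_cases hDne : D.Nonempty
  swap
  · -- D is empty, so x = ⊥
    rw [Set.not_nonempty_iff_eq_empty] at hDne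
    have hxbot : x ≤ ⊥ := by
      refine hcover.trans ?_
      rw [hDne, sSup_empty]
    exact limClosure_down hX (hmem 0) (hxbot.trans bot_le)
  · set P := {y : S // y ∈ D} with hP
    have choosez : ∀ p : P, ∃ z, TB p.1 z ∧ ∃ i j, TB z (m i j) := fun p => p.2
    choose zf hTB1 i0 j0 hTB2 using choosez
    set g : P → ℕ → ℕ∞ := fun p => ρ p.1 with hg
    set h : P → ℕ → ℕ∞ := fun p => ρ (zf p) with hh
    have hGP : ∀ a : ℕ → P, ∃ k l, k < l ∧ g (a k) ≤ h (a l) := by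
      intro a
      obtain ⟨k, l, hkl, hle⟩ := goodPair hconv (fun k => (a k).1) (fun k => zf (a k))
        (fun k => hTB1 (a k))
      exact ⟨k, l, hkl, fun i => ρ_mono hle i⟩
    obtain ⟨Q, hQc, hQdom⟩ := countable_dominating g h hGP
    have hQne : Q.Nonempty := by
      obtain ⟨y, hy⟩ := hDne
      obtain ⟨q, hq, _⟩ := hQdom ⟨y, hy⟩
      exact ⟨q, hq⟩
    obtain ⟨q, hq⟩ := hQc.exists_eq_range hQne
    -- Step 6 : the diagonal sequence
    set J : ℕ → ℕ := fun l => Finset.sup (Finset.range (l + 1))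
      (fun r => (ρ (zf (q r)) l).toNat) with hJ
    set e : ℕ → S := fun K => tailInf (fun l => m l (J l)) K with he
    have he_memX : ∀ K, e K ∈ X := fun K =>
      hX (tailInf_le (fun l => m l (J l)) le_rfl) (hm_memX K (J K))
    have he_mono : Monotone e := tailInf_mono _
    have he_le : ∀ K, e K ≤ x := by
      intro K
      refine (tailInf_le (fun l => m l (J l)) le_rfl).trans ?_
      refine (hmle K (J K)).trans ?_
      rw [hxt]
      exact le_iSup t K
    -- Step 7 : every element of D is absorbed
    have habs : ∀ y ∈ D, y ≤ ⨆ K, e K := by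
      intro y hy
      set p : P := ⟨y, hy⟩ with hp
      obtain ⟨qq, hqQ, hdom⟩ := hQdom p
      rw [hq] at hqQ
      obtain ⟨r, rfl⟩ := hqQ
      set L : ℕ := max r (i0 (q r)) with hL
      have hstep : ∀ l, L ≤ l → y ≤ m l (J l) := by
        intro l hl
        have h1 : i0 (q r) ≤ l := le_trans (le_max_right _ _) hl
        have h2 : r ≤ l := le_trans (le_max_left _ _) hl
        obtain ⟨j, hjz⟩ := hzfin (zf (q r)) (i0 (q r)) (j0 (q r)) (hTB2 (q r)) l h1
        have hfin : ρ (zf (q r)) l ≤ (j : ℕ∞) := ρ_fin hjz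
        have hfin' : ρ (zf (q r)) l ≠ ⊤ := by
          intro hcontr
          rw [hcontr, top_le_iff] at hfin
          exact ENat.coe_ne_top j hfin
        have hcast : ρ (zf (q r)) l = (((ρ (zf (q r)) l).toNat : ℕ) : ℕ∞) :=
          (ENat.coe_toNat hfin').symm
        have hJl : (ρ (zf (q r)) l).toNat ≤ J l := by
          show _ ≤ Finset.sup (Finset.range (l + 1)) (fun r' => (ρ (zf (q r')) l).toNat)
          exact Finset.le_sup (f := fun r' => (ρ (zf (q r')) l).toNat)
            (Finset.mem_range.2 (Nat.lt_succ_of_le h2))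
        have hρy : ρ y l ≤ ((J l : ℕ) : ℕ∞) := by
          have hd : ρ y l ≤ ρ (zf (q r)) l := hdom l
          rw [hcast] at hd
          exact hd.trans (by exact_mod_cast hJl)
        exact ρ_spec y l (J l) hρy
      refine le_trans ?_ (le_iSup e L)
      exact le_iInf₂ fun l hl => hstep l hl
    -- Step 8 : conclude
    have hxe : x = ⨆ K, e K := by
      apply le_antisymm
      · exact hcover.trans (sSup_le habs)
      · exact iSup_le he_le
    rw [hx] at hxe ⊢
    rw [hxe]
    exact mem_limClosure_of_monotone he_memX he_mono

end Crux

end LimProof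

open LimProof in
/-- In a converging lattice, the closure of a downward-closed set
`X` is expansive (`X ⊆ cl(X)`), idempotent (`cl(cl(X)) = cl(X)`), and yields a
downward-closed set (`↓cl(X) = cl(X)`). -/
theorem limClosure_expansive_idempotent_downClosed
    {S : Type*} [CompletelyDistribLattice S] (hconv : ConvergingLattice S)
    (X : Set S) (hX : ∀ ⦃s t : S⦄, s ≤ t → t ∈ X → s ∈ X) :
    X ⊆ limClosure X ∧
    limClosure (limClosure X) = limClosure X ∧
    {s | ∃ t ∈ limClosure X, s ≤ t} = limClosure X := by
  refine ⟨subset_limClosure X, ?_, ?_⟩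
  · apply Set.Subset.antisymm
    · intro x hx
      obtain ⟨s, hmem, hc, rfl⟩ := hx
      exact limClosure_seqClosed hconv hX s hmem hc
    · exact subset_limClosure _
  · apply Set.Subset.antisymm
    · rintro y ⟨t, ht, hyt⟩
      exact limClosure_down hX ht hyt
    · intro y hy
      exact ⟨y, hy, le_rfl⟩
end

section
/- Let (S, ≤) be a countable converging lattice and let G ⊆ S be nonempty and closed. Then G has a maximal element, i.e., there exists g ∈ G such that no g' ∈ G satisfies g ≤ g' and g ≠ g'. -/
/-- In a countable converging lattice, every nonempty closed set
has a maximal element. -/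
theorem closed_set_has_maximal_element
    {S : Type*} [CompletelyDistribLattice S] [Countable S]
    (hconv : ConvergingLattice S)
    (G : Set S) (hne : G.Nonempty) (hG : SeqClosed G) :
    ∃ g ∈ G, ∀ g' ∈ G, ¬(g ≤ g' ∧ g ≠ g') := by
  classical
  obtain ⟨g0, hg0⟩ := hne
  have : Nonempty S := ⟨g0⟩
  obtain ⟨e, he⟩ := exists_surjective_nat S
  let s : ℕ → S := fun n => Nat.rec g0 (fun n x => @ite S (x ≤ e n ∧ e n ∈ G) (Classical.propDecidable _) (e n) x) n
  have hstep : ∀ n, s (n + 1) = @ite S (s n ≤ e n ∧ e n ∈ G) (Classical.propDecidable _) (e n) (s n) := by intro n; rfl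
  have hmem : ∀ n, s n ∈ G := by
    intro n
    induction n with
    | zero => exact hg0
    | succ n ih =>
      rw [hstep]
      split
      · exact (by assumption : s n ≤ e n ∧ e n ∈ G).2
      · exact ih
  have hmono : Monotone s := by
    apply monotone_nat_of_le_succ
    intro n
    rw [hstep]
    split
    · exact (by assumption : s n ≤ e n ∧ e n ∈ G).1
    · exact le_rfl
  have hconvs : Converges s := by
    unfold Converges
    congr 1
    funext i
    apply le_antisymm
    · exact iInf_le_of_le i (iInf_le _ le_rfl)
    · exact le_iInf fun j => le_iInf fun hij => hmono hij
  refine ⟨⨆ i, s i, hG s hmem hconvs, ?_⟩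
  rintro g' hg' ⟨hle, hne'⟩
  obtain ⟨n, rfl⟩ := he g'
  have h1 : s n ≤ e n := le_trans (le_iSup s n) hle
  have h2 : e n ≤ ⨆ i, s i := by
    have : s (n + 1) = e n := by rw [hstep]; exact if_pos ⟨h1, hg'⟩
    calc e n = s (n+1) := this.symm
      _ ≤ ⨆ i, s i := le_iSup s (n+1)
  exact hne' (le_antisymm hle h2)
end

section
/- Let (S, ≤) be a converging lattice, let G ⊆ S be closed, and let H ⊆ S be arbitrary. Then G \ ↓H is closed. -/
/-- In a converging lattice, subtracting the downward closure of
an arbitrary set from a closed set yields a closed set. -/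
theorem closed_sdiff_downClosure
    {S : Type*} [CompletelyDistribLattice S] (hconv : ConvergingLattice S)
    (G : Set S) (hG : SeqClosed G) (H : Set S) :
    SeqClosed (G \ {s | ∃ h ∈ H, s ≤ h}) := by
  intro s hs hc
  refine ⟨hG s (fun i => (hs i).1) hc, ?_⟩
  rintro ⟨h, hh, hle⟩
  exact (hs 0).2 ⟨h, hh, (le_iSup s 0).trans hle⟩
end

section
/- Let (S, ≤) be a countable converging lattice and let G ⊆ S be downward closed and closed. Then there exists a finite set Q ⊆ G with ↓Q = G; in fact Q can be taken to be the set of maximal elements of G, which forms a finite antichain. -/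
/-- Monotone sequences converge. -/
lemma converges_of_monotone {S : Type*} [CompleteLattice S] {s : ℕ → S}
    (hs : Monotone s) : Converges s := by
  have h : ∀ i, (⨅ j, ⨅ (_ : i ≤ j), s j) = s i := fun i =>
    le_antisymm (iInf₂_le i le_rfl) (le_iInf₂ fun j hij => hs hij)
  unfold Converges
  simp [h]

/-- In a countable converging lattice, every set `G` that is both
downward closed and closed is the downward closure of a finite subset; in fact the
set of maximal elements of `G` works, and it is a finite antichain. -/
theorem closed_downClosed_finitely_represented
    {S : Type*} [CompletelyDistribLattice S] [Countable S]
    (hconv : ConvergingLattice S)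
    (G : Set S) (hdc : ∀ ⦃s t : S⦄, s ≤ t → t ∈ G → s ∈ G) (hG : SeqClosed G) :
    ∃ Q : Set S, Q ⊆ G ∧ Q.Finite ∧ {s | ∃ q ∈ Q, s ≤ q} = G ∧
      Q = {g ∈ G | ∀ g' ∈ G, g ≤ g' → g = g'} ∧
      ∀ a ∈ Q, ∀ b ∈ Q, a ≤ b → a = b := by
  classical
  set M : Set S := {g ∈ G | ∀ g' ∈ G, g ≤ g' → g = g'} with hM
  -- every element of G is below a maximal element of G
  have hmax : ∀ x ∈ G, ∃ m ∈ M, x ≤ m := by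
    intro x hx
    have hzorn : ∀ c ⊆ G, IsChain (· ≤ ·) c → ∀ y ∈ c, ∃ ub ∈ G, ∀ z ∈ c, z ≤ ub := by
      intro c hcG hchain y hy
      have hcc : c.Countable := c.to_countable
      obtain ⟨f, hf⟩ := Set.Countable.exists_eq_range hcc ⟨y, hy⟩
      -- running maxima of f
      set t : ℕ → S := fun n => Nat.rec (f 0) (fun n ih => ih ⊔ f (n + 1)) n with ht
      have hf_mem : ∀ k, f k ∈ c := by
        intro k; rw [hf]; exact ⟨k, rfl⟩
      have ht_mem : ∀ n, t n ∈ c := by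
        intro n
        induction n with
        | zero => exact hf_mem 0
        | succ n ih =>
          rcases hchain.total ih (hf_mem (n + 1)) with h | h
          · have : t (n + 1) = f (n + 1) := sup_eq_right.mpr h
            rw [this]; exact hf_mem (n + 1)
          · have : t (n + 1) = t n := sup_eq_left.mpr h
            rw [this]; exact ih
      have ht_mono : Monotone t := monotone_nat_of_le_succ fun n => le_sup_left
      have hft : ∀ k, f k ≤ t k := by
        intro k
        cases k with
        | zero => exact le_rfl
        | succ k => exact le_sup_right
      have hsup : (⨆ i, t i) ∈ G :=
        hG t (fun i => hcG (ht_mem i)) (converges_of_monotone ht_mono)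
      refine ⟨⨆ i, t i, hsup, ?_⟩
      intro z hz
      rw [hf] at hz
      obtain ⟨k, rfl⟩ := hz
      exact (hft k).trans (le_iSup t k)
    obtain ⟨m, hxm, hmax'⟩ := zorn_le_nonempty₀ G hzorn x hx
    exact ⟨m, ⟨hmax'.1, fun g' hg' hle => le_antisymm hle (hmax'.2 hg' hle)⟩, hxm⟩
  -- M is finite
  have hMfin : M.Finite := by
    by_contra hinf
    replace hinf : M.Infinite := hinf
    set e := hinf.natEmbedding with he
    set q : ℕ → S := fun n => (e n : S) with hq
    have hq_inj : Function.Injective q := fun a b hab => e.injective (Subtype.ext hab)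
    have hq_mem : ∀ n, q n ∈ M := fun n => (e n).2
    obtain ⟨φ, hφ, hconvq⟩ := hconv q
    have hsup : (⨆ i, (q ∘ φ) i) ∈ G :=
      hG (q ∘ φ) (fun i => (hq_mem (φ i)).1) hconvq
    have heq : ∀ i, (q ∘ φ) i = ⨆ j, (q ∘ φ) j := fun i =>
      (hq_mem (φ i)).2 _ hsup (le_iSup (q ∘ φ) i)
    have : q (φ 0) = q (φ 1) := (heq 0).trans (heq 1).symm
    have : φ 0 = φ 1 := hq_inj this
    exact absurd this (hφ Nat.zero_lt_one).ne
  refine ⟨M, fun m hm => hm.1, hMfin, ?_, rfl, fun a ha b hb hab => ha.2 b hb.1 hab⟩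
  ext x
  constructor
  · rintro ⟨q, hq, hle⟩
    exact hdc hle hq.1
  · intro hx
    obtain ⟨m, hm, hxm⟩ := hmax x hx
    exact ⟨m, hm, hxm⟩
end

section
/- Let Σ be a finite alphabet and L ⊆ Σ*. Then L is the language of some deterministic upward-compatible well-structured transition system if and only if the Nerode quasi order ⪯_L on Σ* is a WQO. -/
/-- The Nerode quasi order of a language: `u ⪯_L v` iff every extension of `u`
in `L` is also an extension of `v` in `L`. -/
def NerodeLe {A : Type} (L : Set (List A)) (u v : List A) : Prop :=
  ∀ w : List A, u ++ w ∈ L → v ++ w ∈ L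

namespace ULTS

variable {A : Type}

lemma reachSet_append (U : ULTS A) (P : Set U.S) (u w : List A) :
    U.reachSet P (u ++ w) = U.reachSet (U.reachSet P u) w := by
  induction u generalizing P with
  | nil => rfl
  | cons a u ih => simp [reachSet, ih]

lemma reach_mono (U : ULTS A) (w : List A) :
    ∀ P Q : Set U.S, (∀ p ∈ P, ∃ q ∈ Q, U.le p q) →
      ∀ s' ∈ U.reachSet P w, ∃ t' ∈ U.reachSet Q w, U.le s' t' := by
  induction w with
  | nil => intro P Q h s' hs'; exact h s' hs'
  | cons a w ih =>
    intro P Q h s' hs'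
    refine ih (U.stepSet P a) (U.stepSet Q a) ?_ s' hs'
    intro p' hp'
    simp only [stepSet, Set.mem_iUnion] at hp'
    obtain ⟨p, hp, hp'⟩ := hp'
    obtain ⟨q, hq, hle⟩ := h p hp
    obtain ⟨q', hq', hle'⟩ := U.sim a hle hp'
    exact ⟨q', by simp only [stepSet, Set.mem_iUnion]; exact ⟨q, hq, hq'⟩, hle'⟩

end ULTS

/-- The canonical ULTS of a language built on the Nerode quasi order. -/
def nerodeULTS {A : Type} (L : Set (List A)) : ULTS A where
  S := List A
  le := NerodeLe L
  le_refl := fun _ _ h => h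
  le_trans := fun _ _ _ h1 h2 w hw => h2 w (h1 w hw)
  init := {[]}
  tr := fun s a => {s ++ [a]}
  final := L
  final_up := fun s t hs hle => by simpa using hle [] (by simpa using hs)
  sim := fun s t a s' hle hs' => by
    refine ⟨t ++ [a], rfl, ?_⟩
    rw [Set.mem_singleton_iff] at hs'; subst hs'
    intro w hw
    simpa using hle ([a] ++ w) (by simpa using hw)

lemma nerodeULTS_reach {A : Type} (L : Set (List A)) (u : List A) :
    ∀ w : List A, (nerodeULTS L).reachSet {u} w = {u ++ w} := by
  intro w
  induction w generalizing u with
  | nil => simp [ULTS.reachSet]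
  | cons a w ih =>
    have hstep : (nerodeULTS L).stepSet {u} a = {u ++ [a]} := by
      simp [ULTS.stepSet, nerodeULTS]
      show ⋃ s ∈ ({u} : Set (List A)), ({s ++ [a]} : Set (List A)) = {u ++ [a]}
      simp
    simp [ULTS.reachSet, hstep, ih]

/-- A language over a finite alphabet is accepted by a
deterministic upward-compatible WSTS iff its Nerode quasi order is a WQO. -/
theorem det_wsts_lang_iff_nerode_wqo {A : Type} [Finite A] (L : Set (List A)) :
    (∃ U : ULTS A, U.IsWQO ∧ U.Deterministic ∧ U.lang = L) ↔
      IsWQORel (NerodeLe L) := by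
  constructor
  · rintro ⟨U, hwqo, ⟨⟨s0, hs0⟩, hdet⟩, hlang⟩
    -- deterministic successor function
    choose next hnext using hdet
    -- state reached from s by reading w
    let δ : U.S → List A → U.S := fun s w => w.foldl next s
    have hδ : ∀ (w : List A) (s : U.S), U.reachSet {s} w = {δ s w} := by
      intro w
      induction w with
      | nil => intro s; rfl
      | cons a w ih =>
        intro s
        have hstep : U.stepSet {s} a = {next s a} := by
          simp [ULTS.stepSet, hnext]
        show U.reachSet (U.stepSet {s} a) w = _
        rw [hstep, ih]
        rfl
    intro f
    obtain ⟨i, j, hij, hle⟩ := hwqo (fun n => δ s0 (f n))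
    refine ⟨i, j, hij, ?_⟩
    intro w hw
    rw [← hlang] at hw ⊢
    obtain ⟨x, hx, hxF⟩ := hw
    rw [hs0, U.reachSet_append, hδ] at hx
    obtain ⟨t', ht', hle'⟩ := U.reach_mono w {δ s0 (f i)} {δ s0 (f j)}
      (fun p hp => ⟨δ s0 (f j), rfl, by rw [Set.mem_singleton_iff.mp hp]; exact hle⟩)
      x hx
    refine ⟨t', ?_, U.final_up hxF hle'⟩
    rw [hs0, U.reachSet_append, hδ]
    exact ht'
  · intro hwqo
    refine ⟨nerodeULTS L, hwqo, ⟨⟨[], rfl⟩, fun (s : List A) a => ⟨s ++ [a], rfl⟩⟩, ?_⟩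
    ext w
    have : (nerodeULTS L).reachSet {([] : List A)} w = {w} := by
      simpa using nerodeULTS_reach L [] w
    simp [ULTS.lang, show (nerodeULTS L).init = {([] : List A)} from rfl, this,
      show (nerodeULTS L).final = L from rfl]
    exact Set.singleton_inter_nonempty
end

section
/- The Rado order ⪯ on the Rado set R = {(c,r) ∈ ℕ×ℕ : c < r}, defined by (c₁,r₁) ⪯ (c₂,r₂) iff r₁ ≤ c₂ or (c₁ = c₂ and r₁ ≤ r₂), is a quasi order (reflexive and transitive) and a WQO: every sequence f : ℕ → R has indices i < j with f(i) ⪯ f(j). -/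
/-- The Rado set: pairs `(c, r)` of naturals with `c < r`. -/
def RadoSet : Type := {x : ℕ × ℕ // x.1 < x.2}

/-- The Rado order: `(c₁, r₁) ⪯ (c₂, r₂)` iff `r₁ ≤ c₂`, or `c₁ = c₂` and
`r₁ ≤ r₂`. -/
def radoLe (p q : RadoSet) : Prop :=
  p.1.2 ≤ q.1.1 ∨ (p.1.1 = q.1.1 ∧ p.1.2 ≤ q.1.2)

/-- The Rado order on the Rado set is reflexive, transitive,
and a WQO. -/
theorem rado_quasi_order_wqo :
    (∀ p : RadoSet, radoLe p p) ∧
    (∀ p q r : RadoSet, radoLe p q → radoLe q r → radoLe p r) ∧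
    (∀ f : ℕ → RadoSet, ∃ i j, i < j ∧ radoLe (f i) (f j)) := by
  refine ⟨fun p => Or.inr ⟨rfl, le_rfl⟩, ?_, ?_⟩
  · rintro p q r (h1 | ⟨h1, h1'⟩) (h2 | ⟨h2, h2'⟩)
    · exact Or.inl (h1.trans (le_of_lt (lt_of_lt_of_le q.2 h2)))
    · exact Or.inl (h2 ▸ h1)
    · exact Or.inl (h1'.trans h2)
    · exact Or.inr ⟨h1.trans h2, h1'.trans h2'⟩
  · intro f
    by_cases h : ∃ j, 0 < j ∧ (f 0).1.2 ≤ (f j).1.1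
    · obtain ⟨j, hj, hle⟩ := h
      exact ⟨0, j, hj, Or.inl hle⟩
    · push_neg at h
      have hb : ∀ n : ℕ, (f (n + 1)).1.1 < (f 0).1.2 := fun n => h (n + 1) n.succ_pos
      set g : ℕ → Fin (f 0).1.2 := fun n => ⟨(f (n + 1)).1.1, hb n⟩ with hg
      have : ∃ y, (g ⁻¹' {y}).Infinite := by
        obtain ⟨y, hy⟩ := Finite.exists_infinite_fiber g
        exact ⟨y, Set.infinite_coe_iff.mp hy⟩
      obtain ⟨y, hy⟩ := this
      -- S : infinite set of n with (f (n+1)).1.1 = y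
      set S : Set ℕ := g ⁻¹' {y} with hS
      have hSne : S.Nonempty := hy.nonempty
      -- pick i ∈ S minimizing r-value
      set T : Set ℕ := (fun n => (f (n + 1)).1.2) '' S with hT
      have hTne : T.Nonempty := hSne.image _
      obtain ⟨i, hiS, hir⟩ := Nat.sInf_mem hTne
      obtain ⟨j, hjS, hij⟩ := hy.exists_gt i
      refine ⟨i + 1, j + 1, by omega, Or.inr ⟨?_, ?_⟩⟩
      · have h1 : g i = y := hiS
        have h2 : g j = y := hjS
        have := h1.trans h2.symm
        simpa [hg, Fin.ext_iff] using this
      · have hir' : (f (i + 1)).1.2 = sInf T := hir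
        rw [hir']
        exact Nat.sInf_le ⟨j, hjS, rfl⟩
end

section
/- In the Rado order, let Cᵢ = {(i,r) ∈ R : i < r} denote column i and ↓Cᵢ its downward closure with respect to ⪯. Then the family {↓Cᵢ : i ∈ ℕ} is an infinite antichain in the set of downward-closed subsets of R ordered by inclusion: for all i ≠ j, ↓Cᵢ ⊄ ↓C_j and ↓C_j ⊄ ↓Cᵢ (and ↓Cᵢ ≠ ↓C_j). -/
/-- Column `i` of the Rado set. -/
def radoCol (i : ℕ) : Set RadoSet := {p | p.1.1 = i}

/-- Downward closure in the Rado order. -/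
def radoDcl (P : Set RadoSet) : Set RadoSet := {x | ∃ p ∈ P, radoLe x p}

/-- The downward closures of the columns of the Rado set form an
infinite antichain in the downward-closed subsets of the Rado set ordered by
inclusion: distinct columns have incomparable, distinct downward closures. -/
theorem rado_columns_antichain :
    ∀ i j : ℕ, i ≠ j →
      ¬(radoDcl (radoCol i) ⊆ radoDcl (radoCol j)) ∧
      ¬(radoDcl (radoCol j) ⊆ radoDcl (radoCol i)) ∧
      radoDcl (radoCol i) ≠ radoDcl (radoCol j) := by
  have key : ∀ i j : ℕ, i ≠ j → ¬(radoDcl (radoCol i) ⊆ radoDcl (radoCol j)) := by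
    intro i j hij hsub
    have hlt : i < i + j + 1 := by omega
    let x : RadoSet := ⟨(i, i + j + 1), hlt⟩
    have hx : x ∈ radoDcl (radoCol i) := ⟨x, rfl, Or.inr ⟨rfl, le_refl _⟩⟩
    obtain ⟨p, hp, hle⟩ := hsub hx
    rcases hle with h | ⟨h1, _⟩
    · have hp1 : p.1.1 = j := hp
      have hx2 : x.1.2 = i + j + 1 := rfl
      omega
    · exact hij (h1.trans hp)
  intro i j hij
  refine ⟨key i j hij, key j i hij.symm, fun h => key i j hij (h.le)⟩
end

section
/- There exist a finite alphabet Σ with three letters and a language L ⊆ Σ* such that L is the language of some upward-compatible well-structured transition system, but L is not the language of any deterministic upward-compatible well-structured transition system. Consequently, the class of deterministic WSTS languages is strictly contained in the class of WSTS languages. -/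
section AuxWSTS

/-- Acceptance of a word from a single state of a ULTS. -/
def UAcc {A : Type} (W : ULTS A) : List A → W.S → Prop
  | [], s => s ∈ W.final
  | x :: w, s => ∃ s', s' ∈ W.tr s x ∧ UAcc W w s'

lemma reach_acc {A : Type} (W : ULTS A) :
    ∀ (w : List A) (P : Set W.S),
      (W.reachSet P w ∩ W.final).Nonempty ↔ ∃ s ∈ P, UAcc W w s := by
  intro w
  induction w with
  | nil =>
      intro P
      constructor
      · rintro ⟨s, hs, hf⟩; exact ⟨s, hs, hf⟩
      · rintro ⟨s, hs, hf⟩; exact ⟨s, hs, hf⟩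
  | cons x w ih =>
      intro P
      show (W.reachSet (W.stepSet P x) w ∩ W.final).Nonempty ↔ _
      rw [ih]
      constructor
      · rintro ⟨s', hs', hacc⟩
        simp only [ULTS.stepSet, Set.mem_iUnion] at hs'
        obtain ⟨s, hsP, hmem⟩ := hs'
        exact ⟨s, hsP, s', hmem, hacc⟩
      · rintro ⟨s, hsP, s', hmem, hacc⟩
        refine ⟨s', ?_, hacc⟩
        simp only [ULTS.stepSet, Set.mem_iUnion]
        exact ⟨s, hsP, hmem⟩

lemma lang_iff {A : Type} (W : ULTS A) (w : List A) :
    w ∈ W.lang ↔ ∃ s ∈ W.init, UAcc W w s := reach_acc W w W.init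

lemma UAcc_mono {A : Type} (W : ULTS A) :
    ∀ (w : List A) (s t : W.S), W.le s t → UAcc W w s → UAcc W w t := by
  intro w
  induction w with
  | nil => intro s t hle hacc; exact W.final_up hacc hle
  | cons x w ih =>
      rintro s t hle ⟨s', hs', hacc⟩
      obtain ⟨t', ht', hle'⟩ := W.sim x hle hs'
      exact ⟨t', ht', ih s' t' hle' hacc⟩

/-- States of the witness WSTS. -/
inductive WSt : Type where
  | G : ℕ → ℕ → WSt
  | P : ℕ → ℕ → WSt

namespace WSt
def e : WSt → ℕ | G a _ => a | P a _ => a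
def tc : WSt → ℕ | G _ b => b | P _ b => b
def isG : WSt → Prop | G _ _ => True | P _ _ => False
end WSt

def wle : WSt → WSt → Prop
  | WSt.G e t, WSt.G e' t' => (e = e' ∧ t ≤ t') ∨ e + t < e'
  | WSt.P e t, WSt.P e' t' => (e = e' ∧ t ≤ t') ∨ e + t < e'
  | _, _ => False

def wtr : WSt → Fin 3 → Set WSt := fun s i =>
  match i.val, s with
  | 0, WSt.G e t => {WSt.G (e+1) (t-1)}
  | 1, WSt.G (e+1) t => {WSt.P e t}
  | 1, WSt.G 0 (t+1) => {WSt.P (t+1) 0}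
  | 1, WSt.P (e+1) t => {WSt.P e t}
  | 1, WSt.P 0 (t+1) => {WSt.P (t+1) 0}
  | _, _ => ∅

lemma wle_refl (s : WSt) : wle s s := by cases s <;> simp [wle]

lemma wle_trans : ∀ ⦃s t u : WSt⦄, wle s t → wle t u → wle s u := by
  intro s t u h1 h2
  cases s <;> cases t <;> cases u <;> simp_all [wle] <;> omega

lemma wfinal_up : ∀ ⦃s t : WSt⦄, 0 < s.e → wle s t → 0 < t.e := by
  intro s t h1 h2
  cases s <;> cases t <;> simp_all [wle, WSt.e] <;> omega

lemma wsim : ∀ ⦃s t : WSt⦄ (a : Fin 3) ⦃s' : WSt⦄,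
    wle s t → s' ∈ wtr s a → ∃ t', t' ∈ wtr t a ∧ wle s' t' := by
  rintro s t ⟨v, hv⟩ s' hle hs'
  interval_cases v
  · -- letter a
    cases s with
    | G e1 t1 =>
        cases t with
        | G e2 t2 =>
            simp only [wtr] at hs'
            rw [Set.mem_singleton_iff] at hs'
            subst hs'
            refine ⟨WSt.G (e2+1) (t2-1), rfl, ?_⟩
            simp only [wle] at hle ⊢
            omega
        | P e2 t2 => exact absurd hle (by simp [wle])
    | P e1 t1 => simp only [wtr] at hs'; exact absurd hs' (Set.notMem_empty _)
  · -- letter b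
    cases s with
    | G e1 t1 =>
        cases t with
        | P e2 t2 => exact absurd hle (by simp [wle])
        | G e2 t2 =>
            simp only [wle] at hle
            cases e1 with
            | succ E1 =>
                simp only [wtr] at hs'
                rw [Set.mem_singleton_iff] at hs'
                subst hs'
                cases e2 with
                | zero => omega
                | succ E2 =>
                    refine ⟨WSt.P E2 t2, rfl, ?_⟩
                    simp only [wle]; omega
            | zero =>
                cases t1 with
                | zero => simp only [wtr] at hs'; exact absurd hs' (Set.notMem_empty _)
                | succ T1 =>
                    simp only [wtr] at hs'
                    rw [Set.mem_singleton_iff] at hs'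
                    subst hs'
                    cases e2 with
                    | zero =>
                        have ht2 : T1 + 1 ≤ t2 := by omega
                        cases t2 with
                        | zero => omega
                        | succ T2 =>
                            refine ⟨WSt.P (T2+1) 0, rfl, ?_⟩
                            simp only [wle]; omega
                    | succ E2 =>
                        refine ⟨WSt.P E2 t2, rfl, ?_⟩
                        simp only [wle]; omega
    | P e1 t1 =>
        cases t with
        | G e2 t2 => exact absurd hle (by simp [wle])
        | P e2 t2 =>
            simp only [wle] at hle
            cases e1 with
            | succ E1 =>
                simp only [wtr] at hs'
                rw [Set.mem_singleton_iff] at hs'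
                subst hs'
                cases e2 with
                | zero => omega
                | succ E2 =>
                    refine ⟨WSt.P E2 t2, rfl, ?_⟩
                    simp only [wle]; omega
            | zero =>
                cases t1 with
                | zero => simp only [wtr] at hs'; exact absurd hs' (Set.notMem_empty _)
                | succ T1 =>
                    simp only [wtr] at hs'
                    rw [Set.mem_singleton_iff] at hs'
                    subst hs'
                    cases e2 with
                    | zero =>
                        have ht2 : T1 + 1 ≤ t2 := by omega
                        cases t2 with
                        | zero => omega
                        | succ T2 =>
                            refine ⟨WSt.P (T2+1) 0, rfl, ?_⟩
                            simp only [wle]; omega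
                    | succ E2 =>
                        refine ⟨WSt.P E2 t2, rfl, ?_⟩
                        simp only [wle]; omega
  · -- letter c
    cases s <;> (simp only [wtr] at hs'; exact absurd hs' (Set.notMem_empty _))

lemma keyNat (S : Set ℕ) (hS : S.Infinite) (T : ℕ → ℕ) :
    ∃ i ∈ S, ∃ j ∈ S, i < j ∧ T i ≤ T j := by
  have hne : (T '' S).Nonempty := hS.nonempty.image T
  obtain ⟨i, hiS, hieq⟩ := Nat.sInf_mem hne
  obtain ⟨j, hjS, hij⟩ := hS.exists_gt i
  refine ⟨i, hiS, j, hjS, hij, ?_⟩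
  rw [hieq]
  exact Nat.sInf_le ⟨j, hjS, rfl⟩

lemma keyPair (S : Set ℕ) (hS : S.Infinite) (E T : ℕ → ℕ) :
    ∃ i ∈ S, ∃ j ∈ S, i < j ∧ ((E i = E j ∧ T i ≤ T j) ∨ E i + T i < E j) := by
  by_cases h : ∃ v, {n | n ∈ S ∧ E n = v}.Infinite
  · obtain ⟨v, hv⟩ := h
    obtain ⟨i, hi, j, hj, hij, hT⟩ := keyNat _ hv T
    exact ⟨i, hi.1, j, hj.1, hij, Or.inl ⟨hi.2.trans hj.2.symm, hT⟩⟩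
  · push_neg at h
    obtain ⟨i, hiS⟩ := hS.nonempty
    have hfin : {n | n ∈ S ∧ E n ≤ E i + T i}.Finite := by
      have hsub : {n | n ∈ S ∧ E n ≤ E i + T i} ⊆
          ⋃ v ∈ Set.Iic (E i + T i), {n | n ∈ S ∧ E n = v} := by
        rintro n ⟨hnS, hnB⟩
        simp only [Set.mem_iUnion]
        exact ⟨E n, hnB, hnS, rfl⟩
      refine Set.Finite.subset (Set.Finite.biUnion (Set.finite_Iic _) ?_) hsub
      intro v _
      exact h v
    have hinf : (S \ {n | n ∈ S ∧ E n ≤ E i + T i}).Infinite := hS.diff hfin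
    obtain ⟨j, hjmem, hij⟩ := hinf.exists_gt i
    refine ⟨i, hiS, j, hjmem.1, hij, Or.inr ?_⟩
    have : ¬ (E j ≤ E i + T i) := fun hc => hjmem.2 ⟨hjmem.1, hc⟩
    omega

/-- The witness WSTS. -/
def UW : ULTS (Fin 3) where
  S := WSt
  le := wle
  le_refl := wle_refl
  le_trans := wle_trans
  init := {s | ∃ t, s = WSt.G 0 t}
  tr := wtr
  final := {s | 0 < s.e}
  final_up := fun _ _ hs hle => wfinal_up hs hle
  sim := wsim

lemma UW_wqo : UW.IsWQO := by
  intro f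
  by_cases hG : {n | (f n).isG}.Infinite
  · obtain ⟨i, hi, j, hj, hij, hrel⟩ := keyPair _ hG (fun n => (f n).e) (fun n => (f n).tc)
    refine ⟨i, j, hij, ?_⟩
    show wle (f i) (f j)
    rcases hfi : f i with ⟨e1, t1⟩ | ⟨e1, t1⟩
    · rcases hfj : f j with ⟨e2, t2⟩ | ⟨e2, t2⟩
      · rw [hfi, hfj] at hrel
        simp only [WSt.e, WSt.tc] at hrel
        simp only [wle]
        omega
      · have hj' : (f j).isG := hj
        rw [hfj] at hj'
        exact absurd hj' (by simp [WSt.isG])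
    · have hi' : (f i).isG := hi
      rw [hfi] at hi'
      exact absurd hi' (by simp [WSt.isG])
  · have hfin : {n | (f n).isG}.Finite := Set.not_infinite.mp hG
    have hP : {n | ¬ (f n).isG}.Infinite := by
      exact hfin.infinite_compl
    obtain ⟨i, hi, j, hj, hij, hrel⟩ := keyPair _ hP (fun n => (f n).e) (fun n => (f n).tc)
    refine ⟨i, j, hij, ?_⟩
    show wle (f i) (f j)
    rcases hfi : f i with ⟨e1, t1⟩ | ⟨e1, t1⟩
    · have hi' : ¬ (f i).isG := hi
      rw [hfi] at hi'
      exact absurd (by simp [WSt.isG]) hi'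
    · rcases hfj : f j with ⟨e2, t2⟩ | ⟨e2, t2⟩
      · have hj' : ¬ (f j).isG := hj
        rw [hfj] at hj'
        exact absurd (by simp [WSt.isG]) hj'
      · rw [hfi, hfj] at hrel
        simp only [WSt.e, WSt.tc] at hrel
        simp only [wle]
        omega

def aw (n : ℕ) : List (Fin 3) := List.replicate n 0
def bw (k : ℕ) : List (Fin 3) := List.replicate k 1

lemma accP : ∀ (k e t : ℕ), k ≠ e → k ≤ e + t → UAcc UW (bw k) (WSt.P e t) := by
  intro k
  induction k with
  | zero =>
      intro e t h1 _
      show 0 < (WSt.P e t).e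
      simp only [WSt.e]; omega
  | succ K ih =>
      intro e t h1 h2
      show ∃ s', s' ∈ wtr (WSt.P e t) 1 ∧ UAcc UW (bw K) s'
      cases e with
      | succ E => exact ⟨WSt.P E t, rfl, ih E t (by omega) (by omega)⟩
      | zero =>
          cases t with
          | zero => omega
          | succ T => exact ⟨WSt.P (T+1) 0, rfl, ih (T+1) 0 (by omega) (by omega)⟩

lemma accG : ∀ (k e t : ℕ), k ≠ e → k ≤ e + t → UAcc UW (bw k) (WSt.G e t) := by
  intro k e t h1 h2
  cases k with
  | zero =>
      show 0 < (WSt.G e t).e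
      simp only [WSt.e]; omega
  | succ K =>
      show ∃ s', s' ∈ wtr (WSt.G e t) 1 ∧ UAcc UW (bw K) s'
      cases e with
      | succ E => exact ⟨WSt.P E t, rfl, accP K E t (by omega) (by omega)⟩
      | zero =>
          cases t with
          | zero => omega
          | succ T => exact ⟨WSt.P (T+1) 0, rfl, accP K (T+1) 0 (by omega) (by omega)⟩

lemma accA : ∀ (n e t k : ℕ), k ≠ e + n → k ≤ e + n + (t - n) →
    UAcc UW (aw n ++ bw k) (WSt.G e t) := by
  intro n
  induction n with
  | zero =>
      intro e t k h1 h2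
      simpa [aw] using accG k e t (by omega) (by omega)
  | succ N ih =>
      intro e t k h1 h2
      have hrw : aw (N+1) ++ bw k = (0 : Fin 3) :: (aw N ++ bw k) := by
        simp [aw, List.replicate_succ]
      rw [hrw]
      show ∃ s', s' ∈ wtr (WSt.G e t) 0 ∧ UAcc UW (aw N ++ bw k) s'
      exact ⟨WSt.G (e+1) (t-1), rfl, ih (e+1) (t-1) k (by omega) (by omega)⟩

lemma soundW : ∀ (w : List (Fin 3)) (s : WSt), UAcc UW w s →
    ∀ p k, w = aw p ++ bw k →
      (∀ e t, s = WSt.G e t → k ≠ e + p) ∧ (∀ e t, s = WSt.P e t → p = 0 → k ≠ e) := by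
  intro w
  induction w with
  | nil =>
      intro s hacc p k heq
      have hp : p = 0 ∧ k = 0 := by
        have h2 := heq.symm
        simp only [aw, bw, List.append_eq_nil_iff, List.replicate_eq_nil_iff] at h2
        exact h2
      obtain ⟨hp0, hk0⟩ := hp
      subst hp0; subst hk0
      have hfin : 0 < s.e := hacc
      constructor
      · rintro e t rfl; simp only [WSt.e] at hfin; omega
      · rintro e t rfl _; simp only [WSt.e] at hfin; omega
  | cons x w ih =>
      intro s hacc p k heq
      obtain ⟨s', hs', hacc'⟩ := hacc
      cases p with
      | zero =>
          cases k with
          | zero => simp [aw, bw] at heq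
          | succ K =>
              rw [show aw 0 ++ bw (K+1) = (1 : Fin 3) :: bw K by
                simp [aw, bw, List.replicate_succ]] at heq
              obtain ⟨hx, hw⟩ := List.cons_eq_cons.mp heq
              subst hx; subst hw
              constructor
              · rintro e t rfl
                cases e with
                | succ E =>
                    have hs'' : s' = WSt.P E t := hs'
                    subst hs''
                    have IH := (ih _ hacc' 0 K (by simp [aw])).2 E t rfl rfl
                    omega
                | zero =>
                    cases t with
                    | zero => exact absurd hs' (Set.notMem_empty _)
                    | succ T => omega
              · rintro e t rfl _
                cases e with
                | succ E =>
                    have hs'' : s' = WSt.P E t := hs'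
                    subst hs''
                    have IH := (ih _ hacc' 0 K (by simp [aw])).2 E t rfl rfl
                    omega
                | zero =>
                    cases t with
                    | zero => exact absurd hs' (Set.notMem_empty _)
                    | succ T => omega
      | succ Q =>
          rw [show aw (Q+1) ++ bw k = (0 : Fin 3) :: (aw Q ++ bw k) by
            simp [aw, List.replicate_succ]] at heq
          obtain ⟨hx, hw⟩ := List.cons_eq_cons.mp heq
          subst hx; subst hw
          constructor
          · rintro e t rfl
            have hs'' : s' = WSt.G (e+1) (t-1) := hs'
            subst hs''
            have IH := (ih _ hacc' Q k rfl).1 (e+1) (t-1) rfl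
            omega
          · rintro e t rfl h0
            exact absurd h0 (by omega)

lemma mem1 (n k : ℕ) (hnk : n ≠ k) : (aw n ++ bw k) ∈ UW.lang := by
  rw [lang_iff]
  exact ⟨WSt.G 0 (n+k), ⟨n+k, rfl⟩, accA n 0 (n+k) k (by omega) (by omega)⟩

lemma mem2 (n : ℕ) : (aw n ++ bw n) ∉ UW.lang := by
  intro h
  rw [lang_iff] at h
  obtain ⟨s, ⟨t0, rfl⟩, hacc⟩ := h
  have := (soundW _ _ hacc n n rfl).1 0 t0 rfl
  omega

end AuxWSTS


/-- There are a finite alphabet with three letters and a language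
over it that is accepted by some upward-compatible WSTS but by no deterministic
upward-compatible WSTS; hence the deterministic WSTS languages form a strict
subclass of the WSTS languages. -/
theorem wsts_not_determinizable :
    ∃ (A : Type) (_ : Fintype A), Nat.card A = 3 ∧
      ∃ L : Set (List A),
        (∃ U : ULTS A, U.IsWQO ∧ U.lang = L) ∧
        ¬∃ V : ULTS A, V.IsWQO ∧ V.Deterministic ∧ V.lang = L := by
  refine ⟨Fin 3, inferInstance, by simp [Nat.card_eq_fintype_card], UW.lang,
    ⟨UW, UW_wqo, rfl⟩, ?_⟩
  rintro ⟨V, hwqo, ⟨⟨s0, hs0⟩, hstep⟩, hlang⟩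
  choose step hstepEq using hstep
  set f : ℕ → V.S := fun n => (fun s => step s 0)^[n] s0 with hf
  have haccstep : ∀ (w : List (Fin 3)) (s : V.S) (x : Fin 3),
      UAcc V (x :: w) s ↔ UAcc V w (step s x) := by
    intro w s x
    constructor
    · rintro ⟨s', hs', h⟩
      rw [hstepEq, Set.mem_singleton_iff] at hs'
      subst hs'; exact h
    · intro h
      exact ⟨step s x, by rw [hstepEq]; rfl, h⟩
  have key : ∀ (n : ℕ) (w : List (Fin 3)), UAcc V (aw n ++ w) s0 ↔ UAcc V w (f n) := by
    intro n
    induction n with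
    | zero => intro w; simp [aw, hf]
    | succ m ihm =>
        intro w
        have hrw : aw (m+1) ++ w = aw m ++ ((0 : Fin 3) :: w) := by
          simp [aw, List.replicate_succ']
        rw [hrw, ihm, haccstep]
        have : f (m+1) = step (f m) 0 := by
          rw [hf]; exact Function.iterate_succ_apply' _ _ _
        rw [this]
  have hlangiff : ∀ w, w ∈ V.lang ↔ UAcc V w s0 := by
    intro w
    rw [lang_iff, hs0]
    simp
  obtain ⟨i, j, hij, hle⟩ := hwqo f
  have h1 : (aw i ++ bw j) ∈ V.lang := by
    rw [hlang]; exact mem1 i j (by omega)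
  have h2 : UAcc V (bw j) (f i) := (key i _).mp ((hlangiff _).mp h1)
  have h3 : UAcc V (bw j) (f j) := UAcc_mono V _ _ _ hle h2
  have h4 : (aw j ++ bw j) ∈ V.lang := (hlangiff _).mpr ((key j _).mpr h3)
  rw [hlang] at h4
  exact mem2 j h4
end
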